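/- arXiv:1707.05734 — 7 statements merged into one kernel-verified Lean document; each statement's English description precedes it below -/
import Mathlib

section
/- BD(G) = ker(I − DG) and BD(D) = ker(I − GD). Explicitly: an element u of dom(G) belongs to BD(G) if and only if Gu ∈ dom(D) and DGu = u; and an element q of dom(D) belongs to BD(D) if and only if Dq ∈ dom(G) and GDq = q. -/
open Filter Topology

noncomputable section

namespace DtNPaper

local notation "⟪" x ", " y "⟫" => (inner ℂ x y : ℂ)

/-- Membership in the abstract boundary data space `BD(T)`: `u ∈ dom T`
(with `p = T u`, i.e. `(u, p)` in the graph of `T`) and `u` is orthogonal to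
`dom T̊` with respect to the graph inner product of `dom T`. -/
def memBD {E F : Type*} [NormedAddCommGroup E] [InnerProductSpace ℂ E]
    [NormedAddCommGroup F] [InnerProductSpace ℂ F]
    (T Ti : E →ₗ.[ℂ] F) (u : E) : Prop :=
  ∃ p : F, (u, p) ∈ T.graph ∧ ∀ v w, (v, w) ∈ Ti.graph → ⟪v, u⟫ + ⟪w, p⟫ = 0

/-- A bounded operator `M` is coercive if `Re (M x, x) ≥ μ ‖x‖²` for some `μ > 0`. -/
def Coercive {E : Type*} [NormedAddCommGroup E] [InnerProductSpace ℂ E]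
    (M : E →L[ℂ] E) : Prop :=
  ∃ μ : ℝ, 0 < μ ∧ ∀ x : E, μ * ‖x‖ ^ 2 ≤ (⟪x, M x⟫).re

/-- Sequential formulation of compactness of the inclusion of `dom T`
(graph norm) into `E`. -/
def CompactIncl {E F : Type*} [NormedAddCommGroup E] [InnerProductSpace ℂ E]
    [NormedAddCommGroup F] [InnerProductSpace ℂ F] (T : E →ₗ.[ℂ] F) : Prop :=
  ∀ (u : ℕ → E) (p : ℕ → F), (∀ n, (u n, p n) ∈ T.graph) →
    (∃ C : ℝ, ∀ n, ‖u n‖ ^ 2 + ‖p n‖ ^ 2 ≤ C) →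
    ∃ φ : ℕ → ℕ, StrictMono φ ∧ ∃ x : E, Tendsto (fun j => u (φ j)) atTop (𝓝 x)

/-- The range of a partially defined linear operator, as a set. -/
def ranSet {E F : Type*} [NormedAddCommGroup E] [InnerProductSpace ℂ E]
    [NormedAddCommGroup F] [InnerProductSpace ℂ F] (T : E →ₗ.[ℂ] F) : Set F :=
  {p | ∃ u, (u, p) ∈ T.graph}

/-- The Dirichlet-to-Neumann graph associated with `-D a G + m`:
the set of pairs `(π_{BD(G)} u, π_{BD(D)} (a G u))` where `u ∈ dom (D a G)` and
`m u - D a G u = 0`.  The orthogonal projections onto the boundary data spaces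
are characterised by membership in `BD` together with the difference lying in
the domain of the corresponding minimal operator. -/
def dtnGraph {E F : Type*} [NormedAddCommGroup E] [InnerProductSpace ℂ E]
    [NormedAddCommGroup F] [InnerProductSpace ℂ F]
    (G Gi : E →ₗ.[ℂ] F) (D Di : F →ₗ.[ℂ] E)
    (a : F →L[ℂ] F) (m : E →L[ℂ] E) : Set (E × F) :=
  {z | ∃ u p, (u, p) ∈ G.graph ∧ (a p, m u) ∈ D.graph ∧
    memBD G Gi z.1 ∧ u - z.1 ∈ Gi.domain ∧
    memBD D Di z.2 ∧ a p - z.2 ∈ Di.domain}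

/-- The Dirichlet-to-Neumann graph in `H`: `(φ, ψ)` belongs to it if there is
`u₀ ∈ BD(G)` with `κ u₀ = φ` and `Λ u₀ = G (κ* ψ)`; here `k` is `κ` and
`kstarG` is the map `ψ ↦ G (κ* ψ)`. -/
def dtnGraphH {E F HS : Type*} [NormedAddCommGroup E] [InnerProductSpace ℂ E]
    [NormedAddCommGroup F] [InnerProductSpace ℂ F]
    [NormedAddCommGroup HS] [InnerProductSpace ℂ HS]
    (G Gi : E →ₗ.[ℂ] F) (D Di : F →ₗ.[ℂ] E)
    (a : F →L[ℂ] F) (m : E →L[ℂ] E)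
    (k : E → HS) (kstarG : HS → F) : Set (HS × HS) :=
  {z | ∃ u₀ : E, memBD G Gi u₀ ∧ k u₀ = z.1 ∧
    (u₀, kstarG z.2) ∈ dtnGraph G Gi D Di a m}

variable {H₀ H₁ HS : Type*}
  [NormedAddCommGroup H₀] [InnerProductSpace ℂ H₀] [CompleteSpace H₀]
  [NormedAddCommGroup H₁] [InnerProductSpace ℂ H₁] [CompleteSpace H₁]


/-- Bipolar-type lemma: for a closed submodule `S ⊆ H₁ × H₀`, an element `(x, y)`
annihilated by every pair `(v, w)` annihilating the flipped graph of `S` must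
satisfy `(y, x) ∈ S`. -/
theorem bipolar_aux {H₀ H₁ : Type*}
    [NormedAddCommGroup H₀] [InnerProductSpace ℂ H₀] [CompleteSpace H₀]
    [NormedAddCommGroup H₁] [InnerProductSpace ℂ H₁] [CompleteSpace H₁]
    (S : Submodule ℂ (H₁ × H₀)) (hS : IsClosed (S : Set (H₁ × H₀)))
    (x : H₀) (y : H₁)
    (h : ∀ v : H₀, ∀ w : H₁, (∀ q s, (q, s) ∈ S → ⟪v, s⟫ + ⟪w, q⟫ = 0) →
      ⟪v, x⟫ + ⟪w, y⟫ = 0) : (y, x) ∈ S := by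
  set e : WithLp 2 (H₀ × H₁) ≃L[ℂ] H₀ × H₁ := WithLp.prodContinuousLinearEquiv 2 ℂ H₀ H₁
  set f : (H₁ × H₀) →ₗ[ℂ] WithLp 2 (H₀ × H₁) :=
    (e.symm.toLinearMap.comp ((LinearEquiv.prodComm ℂ H₁ H₀).toLinearMap))
  set S' : Submodule ℂ (WithLp 2 (H₀ × H₁)) := S.map f with hS'
  have hmem : ∀ z : WithLp 2 (H₀ × H₁), z ∈ S' ↔ ((e z).2, (e z).1) ∈ S := by
    intro z
    constructor
    · rintro ⟨⟨q, s⟩, hqs, rfl⟩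
      simpa [f, e] using hqs
    · intro hz
      exact ⟨((e z).2, (e z).1), hz, rfl⟩
  have hS'closed : IsClosed (S' : Set (WithLp 2 (H₀ × H₁))) := by
    have : (S' : Set (WithLp 2 (H₀ × H₁))) =
        (fun z => ((e z).2, (e z).1)) ⁻¹' (S : Set (H₁ × H₀)) := by
      ext z; simpa using hmem z
    rw [this]
    exact hS.preimage (by fun_prop)
  haveI : CompleteSpace S' := hS'closed.completeSpace_coe
  have hxy : e.symm (x, y) ∈ S'ᗮᗮ := by
    rw [Submodule.mem_orthogonal]
    intro z hz
    have hz' : ∀ q s, (q, s) ∈ S → ⟪(e z).1, s⟫ + ⟪(e z).2, q⟫ = 0 := by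
      intro q s hqs
      have := (Submodule.mem_orthogonal' _ _).1 hz (f (q, s)) ⟨(q, s), hqs, rfl⟩
      simpa [WithLp.prod_inner_apply, f, e, WithLp.toLp_fst,
        WithLp.toLp_snd, add_comm] using this
    have := h (e z).1 (e z).2 hz'
    simpa [WithLp.prod_inner_apply, e, WithLp.toLp_fst,
      WithLp.toLp_snd] using this
  rw [Submodule.orthogonal_orthogonal] at hxy
  have := (hmem _).1 hxy
  simpa [e] using this

/-- Lemma 2.5: `BD(G) = ker(I - DG)` and `BD(D) = ker(I - GD)`. -/
theorem statement0
    (G Gi : H₀ →ₗ.[ℂ] H₁) (D Di : H₁ →ₗ.[ℂ] H₀)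
    (hGdense : Dense (G.domain : Set H₀)) (hDdense : Dense (D.domain : Set H₁))
    (hGclosed : IsClosed (G.graph : Set (H₀ × H₁)))
    (hDclosed : IsClosed (D.graph : Set (H₁ × H₀)))
    (hGi : ∀ u w, (u, w) ∈ Gi.graph ↔ ∀ q s, (q, s) ∈ D.graph → ⟪w, q⟫ = -⟪u, s⟫)
    (hDi : ∀ q w, (q, w) ∈ Di.graph ↔ ∀ u p, (u, p) ∈ G.graph → ⟪w, u⟫ = -⟪q, p⟫)
    (hGiG : Gi.graph ≤ G.graph) (hDiD : Di.graph ≤ D.graph)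
    :
    (∀ u p, (u, p) ∈ G.graph → (memBD G Gi u ↔ (p, u) ∈ D.graph)) ∧
    (∀ q s, (q, s) ∈ D.graph → (memBD D Di q ↔ (s, q) ∈ G.graph)) := by
  constructor
  · intro u p hup
    constructor
    · rintro ⟨p', hup', hann⟩
      have hpp : p' = p := G.mem_graph_snd_inj hup' hup rfl
      subst hpp
      exact bipolar_aux D.graph hDclosed u p'
        (fun v w hvw => hann v w ((hGi v w).2
          (fun q s hqs => by have := hvw q s hqs; linear_combination this)))
    · intro hpu
      refine ⟨p, hup, fun v w hvw => ?_⟩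
      have := (hGi v w).1 hvw p u hpu
      linear_combination this
  · intro q s hqs
    constructor
    · rintro ⟨s', hqs', hann⟩
      have hss : s' = s := D.mem_graph_snd_inj hqs' hqs rfl
      subst hss
      exact bipolar_aux G.graph hGclosed q s'
        (fun v w hvw => hann v w ((hDi v w).2
          (fun u p hup => by have := hvw u p hup; linear_combination this)))
    · intro hsq
      refine ⟨s, hqs, fun v w hvw => ?_⟩
      have := (hDi v w).1 hvw s q hsq
      linear_combination this

end DtNPaper
end
end

section
/- The operators Ġ : BD(G) → BD(D), u ↦ Gu, and Ḋ : BD(D) → BD(G), q ↦ Dq, are well defined and unitary, they are inverse to each other, and (Ġ)* = Ḋ. -/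
open Filter Topology

noncomputable section

namespace DtNPaper

local notation "⟪" x ", " y "⟫" => (inner ℂ x y : ℂ)

variable {H₀ H₁ HS : Type*}
  [NormedAddCommGroup H₀] [InnerProductSpace ℂ H₀] [CompleteSpace H₀]
  [NormedAddCommGroup H₁] [InnerProductSpace ℂ H₁] [CompleteSpace H₁]

lemma graph_unique {E F : Type*} [NormedAddCommGroup E] [InnerProductSpace ℂ E]
    [NormedAddCommGroup F] [InnerProductSpace ℂ F]
    (T : E →ₗ.[ℂ] F) {x : E} {y y' : F}
    (h : (x, y) ∈ T.graph) (h' : (x, y') ∈ T.graph) : y = y' := by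
  have hsub : ((x, y) - (x, y') : E × F) ∈ T.graph := T.graph.sub_mem h h'
  rw [LinearPMap.mem_graph_iff] at hsub
  obtain ⟨d, hd1, hd2⟩ := hsub
  have : d = 0 := by
    ext
    simpa using hd1
  rw [this] at hd2
  simp at hd2
  exact sub_eq_zero.mp (by simpa using hd2.symm)

lemma key_lemma {E F : Type*} [NormedAddCommGroup E] [InnerProductSpace ℂ E] [CompleteSpace E]
    [NormedAddCommGroup F] [InnerProductSpace ℂ F] [CompleteSpace F]
    (T : F →ₗ.[ℂ] E) (S : E →ₗ.[ℂ] F)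
    (hT : IsClosed (T.graph : Set (F × E)))
    (hS : ∀ v w, (v, w) ∈ S.graph ↔ ∀ q s, (q, s) ∈ T.graph → ⟪w, q⟫ = -⟪v, s⟫)
    (u : E) (p : F)
    (h : ∀ v w, (v, w) ∈ S.graph → ⟪v, u⟫ + ⟪w, p⟫ = 0) :
    (p, u) ∈ T.graph := by
  classical
  let e := WithLp.prodContinuousLinearEquiv 2 ℂ E F
  let L : (F × E) →ₗ[ℂ] WithLp 2 (E × F) :=
    ((WithLp.linearEquiv 2 ℂ (E × F)).symm.toLinearMap).comp
      (LinearEquiv.prodComm ℂ F E).toLinearMap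
  let W : Submodule ℂ (WithLp 2 (E × F)) := T.graph.map L
  have hWmem : ∀ x : WithLp 2 (E × F), x ∈ W ↔
      ((WithLp.equiv 2 (E × F) x).2, (WithLp.equiv 2 (E × F) x).1) ∈ T.graph := by
    intro x
    constructor
    · rintro ⟨⟨q, s⟩, hqs, rfl⟩
      exact hqs
    · intro hx
      exact ⟨((WithLp.equiv 2 (E × F) x).2, (WithLp.equiv 2 (E × F) x).1), hx, rfl⟩
  have hWclosed : IsClosed (W : Set (WithLp 2 (E × F))) := by
    have hset : (W : Set (WithLp 2 (E × F))) =
        e ⁻¹' (Prod.swap ⁻¹' (T.graph : Set (F × E))) := by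
      ext x
      simpa [e] using hWmem x
    rw [hset]
    exact (hT.preimage continuous_swap).preimage e.continuous
  have hWperp : ∀ x : WithLp 2 (E × F), x ∈ Wᗮ →
      ((WithLp.equiv 2 (E × F) x).1, (WithLp.equiv 2 (E × F) x).2) ∈ S.graph := by
    intro x hx
    rw [hS]
    intro q s hqs
    have hmem : (WithLp.equiv 2 (E × F)).symm (s, q) ∈ W := by
      rw [hWmem]; simpa using hqs
    have := (Submodule.mem_orthogonal _ _).mp hx _ hmem
    rw [WithLp.prod_inner_apply] at this
    have hconj : ⟪(WithLp.equiv 2 (E × F) x).1, s⟫ + ⟪(WithLp.equiv 2 (E × F) x).2, q⟫ = 0 := by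
      have := congrArg (starRingEnd ℂ) this
      simpa [inner_conj_symm] using this
    linear_combination hconj
  set z : WithLp 2 (E × F) := (WithLp.equiv 2 (E × F)).symm (u, p) with hz
  have hzmem : z ∈ Wᗮᗮ := by
    rw [Submodule.mem_orthogonal]
    intro y hy
    have hgr := hWperp y hy
    have := h _ _ hgr
    rw [WithLp.prod_inner_apply]
    simpa [hz] using this
  rw [Submodule.orthogonal_orthogonal_eq_closure,
    hWclosed.submodule_topologicalClosure_eq] at hzmem
  have := (hWmem z).mp hzmem
  rw [hz] at this
  simpa using this

/-- Lemma 2.7: the operators `Ġ : BD(G) → BD(D)`, `u ↦ G u`, and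
`Ḋ : BD(D) → BD(G)`, `q ↦ D q`, are well defined, unitary, mutually inverse,
and `(Ġ)* = Ḋ`. -/
theorem statement1
    (G Gi : H₀ →ₗ.[ℂ] H₁) (D Di : H₁ →ₗ.[ℂ] H₀)
    (hGdense : Dense (G.domain : Set H₀)) (hDdense : Dense (D.domain : Set H₁))
    (hGclosed : IsClosed (G.graph : Set (H₀ × H₁)))
    (hDclosed : IsClosed (D.graph : Set (H₁ × H₀)))
    (hGi : ∀ u w, (u, w) ∈ Gi.graph ↔ ∀ q s, (q, s) ∈ D.graph → ⟪w, q⟫ = -⟪u, s⟫)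
    (hDi : ∀ q w, (q, w) ∈ Di.graph ↔ ∀ u p, (u, p) ∈ G.graph → ⟪w, u⟫ = -⟪q, p⟫)
    (hGiG : Gi.graph ≤ G.graph) (hDiD : Di.graph ≤ D.graph)
    :
    -- Ġ maps BD(G) into BD(D)
    (∀ u p, (u, p) ∈ G.graph → memBD G Gi u → memBD D Di p) ∧
    -- Ḋ maps BD(D) into BD(G)
    (∀ q s, (q, s) ∈ D.graph → memBD D Di q → memBD G Gi s) ∧
    -- Ḋ Ġ = I on BD(G)
    (∀ u p, (u, p) ∈ G.graph → memBD G Gi u → (p, u) ∈ D.graph) ∧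
    -- Ġ Ḋ = I on BD(D)
    (∀ q s, (q, s) ∈ D.graph → memBD D Di q → (s, q) ∈ G.graph) ∧
    -- Ġ is surjective onto BD(D)
    (∀ q, memBD D Di q → ∃ u, memBD G Gi u ∧ (u, q) ∈ G.graph) ∧
    -- Ḋ is surjective onto BD(G)
    (∀ u, memBD G Gi u → ∃ q, memBD D Di q ∧ (q, u) ∈ D.graph) ∧
    -- Ġ preserves the graph inner products : (Ġu, Ġv)_{BD(D)} = (u, v)_{BD(G)}
    (∀ u p u' v s v', (u, p) ∈ G.graph → (p, u') ∈ D.graph →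
      (v, s) ∈ G.graph → (s, v') ∈ D.graph → memBD G Gi u → memBD G Gi v →
      ⟪s, p⟫ + ⟪v', u'⟫ = ⟪v, u⟫ + ⟪s, p⟫) ∧
    -- Ḋ preserves the graph inner products : (Ḋq, Ḋr)_{BD(G)} = (q, r)_{BD(D)}
    (∀ q s q' r t r', (q, s) ∈ D.graph → (s, q') ∈ G.graph →
      (r, t) ∈ D.graph → (t, r') ∈ G.graph → memBD D Di q → memBD D Di r →
      ⟪t, s⟫ + ⟪r', q'⟫ = ⟪r, q⟫ + ⟪t, s⟫) ∧
    -- (Ġ)* = Ḋ : (Ġu, q)_{BD(D)} = (u, Ḋq)_{BD(G)}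
    (∀ u p p' q s s', (u, p) ∈ G.graph → (p, p') ∈ D.graph →
      (q, s) ∈ D.graph → (s, s') ∈ G.graph → memBD G Gi u → memBD D Di q →
      ⟪q, p⟫ + ⟪s, p'⟫ = ⟪s, u⟫ + ⟪s', p⟫)  := by
  have lemA : ∀ u p, (u, p) ∈ G.graph → memBD G Gi u → (p, u) ∈ D.graph := by
    intro u p hup ⟨p₀, hup₀, horth⟩
    have hpe : p₀ = p := graph_unique G hup₀ hup
    subst hpe
    exact key_lemma D Gi hDclosed hGi u p₀ horth
  have lemB : ∀ q s, (q, s) ∈ D.graph → memBD D Di q → (s, q) ∈ G.graph := by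
    intro q s hqs ⟨s₀, hqs₀, horth⟩
    have hse : s₀ = s := graph_unique D hqs₀ hqs
    subst hse
    exact key_lemma G Di hGclosed hDi q s₀ horth
  refine ⟨?_, ?_, lemA, lemB, ?_, ?_, ?_, ?_, ?_⟩
  · intro u p hup hu
    refine ⟨u, lemA u p hup hu, ?_⟩
    intro v w hvw
    have := (hDi v w).mp hvw u p hup
    linear_combination this
  · intro q s hqs hq
    refine ⟨q, lemB q s hqs hq, ?_⟩
    intro v w hvw
    have := (hGi v w).mp hvw q s hqs
    linear_combination this
  · intro q ⟨s, hqs, horth⟩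
    refine ⟨s, ⟨q, lemB q s hqs ⟨s, hqs, horth⟩, ?_⟩, lemB q s hqs ⟨s, hqs, horth⟩⟩
    intro v w hvw
    have := (hGi v w).mp hvw q s hqs
    linear_combination this
  · intro u ⟨p, hup, horth⟩
    refine ⟨p, ⟨u, lemA u p hup ⟨p, hup, horth⟩, ?_⟩, lemA u p hup ⟨p, hup, horth⟩⟩
    intro v w hvw
    have := (hDi v w).mp hvw u p hup
    linear_combination this
  · intro u p u' v s v' hup hpu' hvs hsv' hu hv
    have h1 : u' = u := graph_unique D hpu' (lemA u p hup hu)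
    have h2 : v' = v := graph_unique D hsv' (lemA v s hvs hv)
    rw [h1, h2]; ring
  · intro q s q' r t r' hqs hsq' hrt htr' hq hr
    have h1 : q' = q := graph_unique G hsq' (lemB q s hqs hq)
    have h2 : r' = r := graph_unique G htr' (lemB r t hrt hr)
    rw [h1, h2]; ring
  · intro u p p' q s s' hup hpp' hqs hss' hu hq
    have h1 : p' = u := graph_unique D hpp' (lemA u p hup hu)
    have h2 : s' = q := graph_unique G hss' (lemB q s hqs hq)
    rw [h1, h2]; ring


end DtNPaper
end
end

section
/- Let BD(G)' denote the space of all continuous antilinear functionals on BD(G) with its dual norm. Then the map Φ : BD(D) → BD(G)' defined by (Φ(q))(u) = (Dq, u)_{H₀} + (q, Gu)_{H₁} for q ∈ BD(D) and u ∈ BD(G) is well defined and unitary (a surjective linear isometry onto BD(G)'). -/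
open Filter Topology

noncomputable section

namespace DtNPaper

local notation "⟪" x ", " y "⟫" => (inner ℂ x y : ℂ)

variable {H₀ H₁ HS : Type*}
  [NormedAddCommGroup H₀] [InnerProductSpace ℂ H₀] [CompleteSpace H₀]
  [NormedAddCommGroup H₁] [InnerProductSpace ℂ H₁] [CompleteSpace H₁]


section Aux
variable {E F : Type*} [NormedAddCommGroup E] [InnerProductSpace ℂ E] [CompleteSpace E]
    [NormedAddCommGroup F] [InnerProductSpace ℂ F] [CompleteSpace F]

theorem mem_graph_of_orth (T : E →ₗ.[ℂ] F) (hT : IsClosed (T.graph : Set (E × F)))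
    (x : E × F)
    (h : ∀ a b, (∀ q s, (q, s) ∈ T.graph → ⟪a, q⟫ + ⟪b, s⟫ = 0) →
      ⟪a, x.1⟫ + ⟪b, x.2⟫ = 0) :
    x ∈ T.graph := by
  set S : Submodule ℂ (WithLp 2 (E × F)) :=
    T.graph.comap (WithLp.linearEquiv 2 ℂ (E × F)).toLinearMap with hSdef
  have hS_closed : IsClosed (S : Set (WithLp 2 (E × F))) := by
    have heq : (S : Set (WithLp 2 (E × F))) =
        (WithLp.prodContinuousLinearEquiv 2 ℂ E F) ⁻¹' (T.graph : Set (E × F)) := rfl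
    rw [heq]
    exact hT.preimage (WithLp.prodContinuousLinearEquiv 2 ℂ E F).continuous
  haveI : CompleteSpace S := hS_closed.completeSpace_coe
  have hx : (WithLp.equiv 2 (E × F)).symm x ∈ Sᗮᗮ := by
    rw [Submodule.mem_orthogonal]
    intro y hy
    rw [Submodule.mem_orthogonal'] at hy
    have key : ∀ q s, (q, s) ∈ T.graph → ⟪y.fst, q⟫ + ⟪y.snd, s⟫ = 0 := by
      intro q s hqs
      have hz : (WithLp.equiv 2 (E × F)).symm (q, s) ∈ S := hqs
      exact hy _ hz
    exact h y.fst y.snd key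
  rwa [Submodule.orthogonal_orthogonal] at hx

omit [CompleteSpace E] [CompleteSpace F] in
theorem memBD_of_flip (T Ti : E →ₗ.[ℂ] F) (S : F →ₗ.[ℂ] E)
    (hTi : ∀ v w, (v, w) ∈ Ti.graph ↔ ∀ q s, (q, s) ∈ S.graph → ⟪w, q⟫ = -⟪v, s⟫)
    {u : E} {p : F} (hu : (u, p) ∈ T.graph) (hflip : (p, u) ∈ S.graph) : memBD T Ti u := by
  refine ⟨p, hu, fun v w hvw => ?_⟩
  have h := (hTi v w).mp hvw p u hflip
  rw [h]; ring

theorem flip_mem_of_memBD (T Ti : E →ₗ.[ℂ] F) (S : F →ₗ.[ℂ] E)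
    (hSclosed : IsClosed (S.graph : Set (F × E)))
    (hTi : ∀ v w, (v, w) ∈ Ti.graph ↔ ∀ q s, (q, s) ∈ S.graph → ⟪w, q⟫ = -⟪v, s⟫)
    {u : E} {p : F} (hu : (u, p) ∈ T.graph) (hBD : memBD T Ti u) : (p, u) ∈ S.graph := by
  obtain ⟨p', hp', horth⟩ := hBD
  have hpp : p' = p := T.mem_graph_snd_inj hp' hu rfl
  subst hpp
  apply mem_graph_of_orth S hSclosed (p', u)
  intro a b hab
  have hba : (b, a) ∈ Ti.graph := (hTi b a).mpr fun q s hqs =>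
    eq_neg_of_add_eq_zero_left (hab q s hqs)
  have h := horth b a hba
  linear_combination h

theorem cs_pair (q : F) (s : E) (u : E) (p : F) :
    ‖⟪u, s⟫ + ⟪p, q⟫‖ ≤
      Real.sqrt (‖q‖ ^ 2 + ‖s‖ ^ 2) * Real.sqrt (‖u‖ ^ 2 + ‖p‖ ^ 2) := by
  set X : WithLp 2 (E × F) := (WithLp.equiv 2 (E × F)).symm (u, p) with hX
  set Y : WithLp 2 (E × F) := (WithLp.equiv 2 (E × F)).symm (s, q) with hY
  have h1 : ⟪u, s⟫ + ⟪p, q⟫ = (inner ℂ X Y : ℂ) := rfl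
  have hXn : ‖X‖ = Real.sqrt (‖u‖ ^ 2 + ‖p‖ ^ 2) := by
    rw [← Real.sqrt_sq (norm_nonneg X), WithLp.prod_norm_sq_eq_of_L2]
    rfl
  have hYn : ‖Y‖ = Real.sqrt (‖s‖ ^ 2 + ‖q‖ ^ 2) := by
    rw [← Real.sqrt_sq (norm_nonneg Y), WithLp.prod_norm_sq_eq_of_L2]
    rfl
  calc ‖⟪u, s⟫ + ⟪p, q⟫‖ = ‖(inner ℂ X Y : ℂ)‖ := by rw [h1]
    _ ≤ ‖X‖ * ‖Y‖ := norm_inner_le_norm X Y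
    _ = Real.sqrt (‖q‖ ^ 2 + ‖s‖ ^ 2) * Real.sqrt (‖u‖ ^ 2 + ‖p‖ ^ 2) := by
        rw [hXn, hYn, add_comm (‖s‖^2), mul_comm]

end Aux

/-- Proposition 2.8: the map `Φ : BD(D) → BD(G)'`,
`(Φ q) u = (D q, u)_{H₀} + (q, G u)_{H₁}`, is well defined and unitary onto the
space of continuous antilinear functionals on `BD(G)`. -/
theorem statement2
    (G Gi : H₀ →ₗ.[ℂ] H₁) (D Di : H₁ →ₗ.[ℂ] H₀)
    (hGdense : Dense (G.domain : Set H₀)) (hDdense : Dense (D.domain : Set H₁))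
    (hGclosed : IsClosed (G.graph : Set (H₀ × H₁)))
    (hDclosed : IsClosed (D.graph : Set (H₁ × H₀)))
    (hGi : ∀ u w, (u, w) ∈ Gi.graph ↔ ∀ q s, (q, s) ∈ D.graph → ⟪w, q⟫ = -⟪u, s⟫)
    (hDi : ∀ q w, (q, w) ∈ Di.graph ↔ ∀ u p, (u, p) ∈ G.graph → ⟪w, u⟫ = -⟪q, p⟫)
    (hGiG : Gi.graph ≤ G.graph) (hDiD : Di.graph ≤ D.graph)
    :
    -- each Φ(q) is a bounded antilinear functional with norm ≤ ‖q‖_{BD(D)}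
    (∀ q s u p, (q, s) ∈ D.graph → memBD D Di q → (u, p) ∈ G.graph →
      memBD G Gi u →
      ‖⟪u, s⟫ + ⟪p, q⟫‖ ≤
        Real.sqrt (‖q‖ ^ 2 + ‖s‖ ^ 2) * Real.sqrt (‖u‖ ^ 2 + ‖p‖ ^ 2)) ∧
    -- Φ is isometric: the dual norm of Φ(q) equals ‖q‖_{BD(D)}
    (∀ q s, (q, s) ∈ D.graph → memBD D Di q →
      sSup {r : ℝ | ∃ u p, (u, p) ∈ G.graph ∧ memBD G Gi u ∧
          ‖u‖ ^ 2 + ‖p‖ ^ 2 ≤ 1 ∧ r = ‖⟪u, s⟫ + ⟪p, q⟫‖} =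
        Real.sqrt (‖q‖ ^ 2 + ‖s‖ ^ 2)) ∧
    -- Φ is surjective: every continuous antilinear functional on BD(G) is Φ(q)
    (∀ F : H₀ → ℂ,
      (∀ u v, memBD G Gi u → memBD G Gi v → F (u + v) = F u + F v) →
      (∀ (c : ℂ) u, memBD G Gi u → F (c • u) = (starRingEnd ℂ) c * F u) →
      (∃ C : ℝ, ∀ u p, (u, p) ∈ G.graph → memBD G Gi u →
        ‖F u‖ ≤ C * Real.sqrt (‖u‖ ^ 2 + ‖p‖ ^ 2)) →
      ∃ q s, (q, s) ∈ D.graph ∧ memBD D Di q ∧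
        ∀ u p, (u, p) ∈ G.graph → memBD G Gi u → F u = ⟪u, s⟫ + ⟪p, q⟫) := by
  have part1 : ∀ q s u p, (q, s) ∈ D.graph → memBD D Di q → (u, p) ∈ G.graph →
      memBD G Gi u →
      ‖⟪u, s⟫ + ⟪p, q⟫‖ ≤
        Real.sqrt (‖q‖ ^ 2 + ‖s‖ ^ 2) * Real.sqrt (‖u‖ ^ 2 + ‖p‖ ^ 2) :=
    fun q s u p _ _ _ _ => cs_pair q s u p
  refine ⟨part1, ?_, ?_⟩
  · -- Part 2: isometry
    intro q s hqs hqBD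
    set N := Real.sqrt (‖q‖ ^ 2 + ‖s‖ ^ 2) with hNdef
    have hN0 : 0 ≤ N := Real.sqrt_nonneg _
    have hN2 : N ^ 2 = ‖q‖ ^ 2 + ‖s‖ ^ 2 := Real.sq_sqrt (by positivity)
    have hflip : (s, q) ∈ G.graph := flip_mem_of_memBD D Di G hGclosed hDi hqs hqBD
    set c : ℂ := ((N : ℂ))⁻¹ with hcdef
    have hcsq : (c • s, c • q) ∈ G.graph := by
      have := G.graph.smul_mem c hflip
      simpa [Prod.smul_mk] using this
    have hcqs : (c • q, c • s) ∈ D.graph := by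
      have := D.graph.smul_mem c hqs
      simpa [Prod.smul_mk] using this
    have hBDu : memBD G Gi (c • s) := memBD_of_flip G Gi D hGi hcsq hcqs
    have hval : ⟪c • s, s⟫ + ⟪c • q, q⟫ = (N : ℂ) := by
      rw [inner_smul_left, inner_smul_left, inner_self_eq_norm_sq_to_K,
        inner_self_eq_norm_sq_to_K]
      have hc : (starRingEnd ℂ) c = c := by
        simp [hcdef, ← Complex.ofReal_inv]
      rw [hc, hcdef, ← mul_add]
      rcases eq_or_lt_of_le hN0 with h0 | h0
      · rw [← h0]; simp
      · have hNne : ((N : ℂ)) ≠ 0 := by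
          exact_mod_cast (ne_of_gt h0)
        rw [inv_mul_eq_iff_eq_mul₀ hNne]
        norm_cast
        congr 1
        show ‖s‖ ^ 2 + ‖q‖ ^ 2 = N * N
        nlinarith [hN2]
    have hnorm1 : ‖c • s‖ ^ 2 + ‖c • q‖ ^ 2 ≤ 1 := by
      rw [norm_smul, norm_smul, mul_pow, mul_pow, ← mul_add, add_comm (‖s‖ ^ 2), ← hN2]
      have hc : ‖c‖ = N⁻¹ := by
        rw [hcdef]
        simp [abs_of_nonneg hN0]
      rw [hc]
      rcases eq_or_lt_of_le hN0 with h0 | h0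
      · rw [← h0]; norm_num
      · rw [inv_pow, inv_mul_cancel₀ (by positivity)]
    apply le_antisymm
    · apply Real.sSup_le _ hN0
      rintro r ⟨u, p, hup, huBD, hle1, rfl⟩
      calc ‖⟪u, s⟫ + ⟪p, q⟫‖ ≤ N * Real.sqrt (‖u‖ ^ 2 + ‖p‖ ^ 2) :=
            part1 q s u p hqs hqBD hup huBD
        _ ≤ N * 1 := by
            apply mul_le_mul_of_nonneg_left _ hN0
            exact Real.sqrt_le_one.mpr hle1
        _ = N := mul_one N
    · apply le_csSup
      · refine ⟨N, ?_⟩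
        rintro r ⟨u, p, hup, huBD, hle1, rfl⟩
        calc ‖⟪u, s⟫ + ⟪p, q⟫‖ ≤ N * Real.sqrt (‖u‖ ^ 2 + ‖p‖ ^ 2) :=
              part1 q s u p hqs hqBD hup huBD
          _ ≤ N * 1 := by
              apply mul_le_mul_of_nonneg_left _ hN0
              exact Real.sqrt_le_one.mpr hle1
          _ = N := mul_one N
      · refine ⟨c • s, c • q, hcsq, hBDu, hnorm1, ?_⟩
        rw [hval, Complex.norm_real, Real.norm_eq_abs]
        exact (abs_of_nonneg hN0).symm
  · -- Part 3: surjectivity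
    intro F hadd hsmul hbdd
    obtain ⟨C, hC⟩ := hbdd
    set K : Submodule ℂ (WithLp 2 (H₀ × H₁)) :=
      (G.graph ⊓ (D.graph.comap (LinearEquiv.prodComm ℂ H₀ H₁).toLinearMap)).comap
        (WithLp.linearEquiv 2 ℂ (H₀ × H₁)).toLinearMap with hKdef
    have hKmem : ∀ x : WithLp 2 (H₀ × H₁),
        x ∈ K ↔ (x.fst, x.snd) ∈ G.graph ∧ (x.snd, x.fst) ∈ D.graph := fun x => Iff.rfl
    have hK_closed : IsClosed (K : Set (WithLp 2 (H₀ × H₁))) := by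
      have heq : (K : Set (WithLp 2 (H₀ × H₁))) =
          (WithLp.prodContinuousLinearEquiv 2 ℂ H₀ H₁) ⁻¹'
            ((G.graph : Set (H₀ × H₁)) ∩ (Prod.swap ⁻¹' (D.graph : Set (H₁ × H₀)))) := rfl
      rw [heq]
      exact (hGclosed.inter (hDclosed.preimage continuous_swap)).preimage
        (WithLp.prodContinuousLinearEquiv 2 ℂ H₀ H₁).continuous
    haveI : CompleteSpace K := hK_closed.completeSpace_coe
    have hKBD : ∀ x : K, memBD G Gi (x : WithLp 2 (H₀ × H₁)).fst := fun x =>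
      memBD_of_flip G Gi D hGi ((hKmem x).mp x.2).1 ((hKmem x).mp x.2).2
    set g : K →ₗ[ℂ] ℂ :=
      { toFun := fun k => (starRingEnd ℂ) (F (k : WithLp 2 (H₀ × H₁)).fst)
        map_add' := fun a b => by
          have h := hadd (a : WithLp 2 (H₀ × H₁)).fst (b : WithLp 2 (H₀ × H₁)).fst
            (hKBD a) (hKBD b)
          show (starRingEnd ℂ) (F ((a : WithLp 2 (H₀ × H₁)).fst +
            (b : WithLp 2 (H₀ × H₁)).fst)) = _
          rw [h, map_add]
        map_smul' := fun m a => by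
          have h := hsmul m (a : WithLp 2 (H₀ × H₁)).fst (hKBD a)
          show (starRingEnd ℂ) (F (m • (a : WithLp 2 (H₀ × H₁)).fst)) = _
          rw [h, map_mul]
          simp } with hgdef
    have hgb : ∀ k : K, ‖g k‖ ≤ C * ‖k‖ := by
      intro k
      have h := hC (k : WithLp 2 (H₀ × H₁)).fst (k : WithLp 2 (H₀ × H₁)).snd
        ((hKmem k).mp k.2).1 (hKBD k)
      have hnk : ‖k‖ = Real.sqrt (‖(k : WithLp 2 (H₀ × H₁)).fst‖ ^ 2 +
          ‖(k : WithLp 2 (H₀ × H₁)).snd‖ ^ 2) := by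
        rw [← Real.sqrt_sq (norm_nonneg k)]
        congr 1
        exact WithLp.prod_norm_sq_eq_of_L2 (k : WithLp 2 (H₀ × H₁))
      rw [hnk]
      have hgk : ‖g k‖ = ‖F (k : WithLp 2 (H₀ × H₁)).fst‖ := by
        show ‖(starRingEnd ℂ) (F (k : WithLp 2 (H₀ × H₁)).fst)‖ = _
        exact RCLike.norm_conj _
      rw [hgk]; exact h
    set g' : K →L[ℂ] ℂ := g.mkContinuous C hgb with hg'def
    set z : K := (InnerProductSpace.toDual ℂ K).symm g' with hzdef
    have hz : ∀ k : K, (inner ℂ z k : ℂ) = g' k := fun k =>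
      InnerProductSpace.toDual_symm_apply
    have hzK := (hKmem z).mp z.2
    refine ⟨(z : WithLp 2 (H₀ × H₁)).snd, (z : WithLp 2 (H₀ × H₁)).fst, hzK.2,
      memBD_of_flip D Di G hDi hzK.2 hzK.1, ?_⟩
    intro u p hup huBD
    have hflip : (p, u) ∈ D.graph := flip_mem_of_memBD G Gi D hDclosed hGi hup huBD
    set k : K := ⟨(WithLp.equiv 2 (H₀ × H₁)).symm (u, p), (hKmem _).mpr ⟨hup, hflip⟩⟩
      with hkdef
    have h1 : (inner ℂ z k : ℂ) = (starRingEnd ℂ) (F u) := hz k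
    have h2 : (inner ℂ z k : ℂ) = ⟪(z : WithLp 2 (H₀ × H₁)).fst, u⟫ +
        ⟪(z : WithLp 2 (H₀ × H₁)).snd, p⟫ := rfl
    have h3 := h1.symm.trans h2
    calc F u = (starRingEnd ℂ) ((starRingEnd ℂ) (F u)) := by simp
      _ = (starRingEnd ℂ) (⟪(z : WithLp 2 (H₀ × H₁)).fst, u⟫ +
            ⟪(z : WithLp 2 (H₀ × H₁)).snd, p⟫) := by rw [h3]
      _ = ⟪u, (z : WithLp 2 (H₀ × H₁)).fst⟫ + ⟪p, (z : WithLp 2 (H₀ × H₁)).snd⟫ := by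
            rw [map_add, inner_conj_symm, inner_conj_symm]


end DtNPaper
end
end

section
/- Let H be a complex Hilbert space, M a bounded operator on H and A a skew-adjoint operator in H (i.e. A* = −A). Let λ > 0 and assume Re(Mx, x)_H ≥ λ‖x‖²_H for all x ∈ H. Then the operator M + A with domain dom(A) is bijective from dom(A) onto H, its inverse (M + A)^{-1} is bounded from H into dom(A) (with the graph norm of A), and ‖(M + A)^{-1}‖_{H → dom(A)} ≤ (1 + λ + ‖M‖)/λ. -/
open Filter Topology

noncomputable section

namespace DtNPaper

local notation "⟪" x ", " y "⟫" => (inner ℂ x y : ℂ)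

variable {H₀ H₁ HS : Type*}
  [NormedAddCommGroup H₀] [InnerProductSpace ℂ H₀] [CompleteSpace H₀]
  [NormedAddCommGroup H₁] [InnerProductSpace ℂ H₁] [CompleteSpace H₁]

set_option maxHeartbeats 1000000 in
/-- Lemma 2.10: if `M` is bounded with `Re (M x, x) ≥ λ ‖x‖²` and `A` is
skew-adjoint, then `M + A` (with domain `dom A`) is invertible and
`‖(M + A)⁻¹‖_{H → dom A} ≤ (1 + λ + ‖M‖)/λ`. -/
theorem statement3 {H : Type*} [NormedAddCommGroup H] [InnerProductSpace ℂ H]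
    [CompleteSpace H]
    (M : H →L[ℂ] H) (A : H →ₗ.[ℂ] H)
    (hAdense : Dense (A.domain : Set H))
    (hskew : ∀ x y, ((x, -y) ∈ A.graph ↔
      ∀ u v, (u, v) ∈ A.graph → ⟪y, u⟫ = ⟪x, v⟫))
    (lam : ℝ) (hlam : 0 < lam)
    (hM : ∀ x : H, lam * ‖x‖ ^ 2 ≤ (⟪x, M x⟫).re) :
    -- M + A is bijective from dom A onto H
    (∀ f : H, ∃! z : H × H, z ∈ A.graph ∧ M z.1 + z.2 = f) ∧
    -- the inverse is bounded from H into dom A with the stated bound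
    (∀ f x v, (x, v) ∈ A.graph → M x + v = f →
      Real.sqrt (‖x‖ ^ 2 + ‖v‖ ^ 2) ≤ ((1 + lam + ‖M‖) / lam) * ‖f‖) := by
  classical
  -- characterisation of the graph via the skewness hypothesis
  have hgraph_char : ∀ x y : H, (x, y) ∈ A.graph ↔
      ∀ u v, (u, v) ∈ A.graph → ⟪-y, u⟫ = ⟪x, v⟫ := by
    intro x y
    have h := hskew x (-y)
    rwa [neg_neg] at h
  -- real part of ⟪x, A x⟫ vanishes
  have hre0 : ∀ x v : H, (x, v) ∈ A.graph → (⟪x, v⟫).re = 0 := by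
    intro x v hxv
    have h := (hgraph_char x v).mp hxv x v hxv
    rw [inner_neg_left] at h
    have h2 := congrArg Complex.re h
    have hsym : (⟪v, x⟫).re = (⟪x, v⟫).re := by
      rw [← inner_conj_symm x v]; exact (Complex.conj_re _).symm
    rw [Complex.neg_re, hsym] at h2
    linarith
  -- the a priori bound
  have hbound : ∀ x v : H, (x, v) ∈ A.graph → lam * ‖x‖ ≤ ‖M x + v‖ := by
    intro x v hxv
    rcases eq_or_ne x 0 with rfl | hx
    · simp
    have h1 : lam * ‖x‖ ^ 2 ≤ (⟪x, M x + v⟫).re := by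
      rw [inner_add_right, Complex.add_re, hre0 x v hxv, add_zero]
      exact hM x
    have h2 : (⟪x, M x + v⟫).re ≤ ‖x‖ * ‖M x + v‖ :=
      re_inner_le_norm (𝕜 := ℂ) x (M x + v)
    have hxpos : 0 < ‖x‖ := norm_pos_iff.mpr hx
    nlinarith [h1, h2]
  -- the graph of A is closed
  have hclosed : IsClosed (A.graph : Set (H × H)) := by
    have hset : (A.graph : Set (H × H)) =
        ⋂ (z : A.graph), {p : H × H |
          ⟪-p.2, (z : H × H).1⟫ = ⟪p.1, (z : H × H).2⟫} := by
      ext ⟨x, y⟩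
      simp only [Set.mem_iInter, Set.mem_setOf_eq, SetLike.mem_coe]
      constructor
      · intro h z
        exact (hgraph_char x y).mp h _ _ z.2
      · intro h
        exact (hgraph_char x y).mpr fun u v huv => h ⟨(u, v), huv⟩
    rw [hset]
    exact isClosed_iInter fun z => isClosed_eq
      (Continuous.inner continuous_snd.neg continuous_const)
      (Continuous.inner continuous_fst continuous_const)
  -- range of M + A as a submodule
  set L : (H × H) →ₗ[ℂ] H := (M : H →ₗ[ℂ] H).coprod LinearMap.id with hL
  set S : Submodule ℂ H := A.graph.map L with hS
  have hmemS : ∀ f : H, f ∈ S ↔ ∃ x v, (x, v) ∈ A.graph ∧ M x + v = f := by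
    intro f
    simp only [hS, Submodule.mem_map, hL, LinearMap.coprod_apply, Prod.exists,
      LinearMap.id_coe, id_eq, ContinuousLinearMap.coe_coe]
  -- the range is closed
  have hSclosed : IsClosed (S : Set H) := by
    rw [← isSeqClosed_iff_isClosed]
    intro g f hg hgf
    choose xs vs hgr hfe using fun n => (hmemS (g n)).mp (hg n)
    have key : ∀ n m, dist (xs n) (xs m) ≤ (1 / lam) * dist (g n) (g m) := by
      intro n m
      have hd : (xs n - xs m, vs n - vs m) ∈ A.graph :=
        A.graph.sub_mem (hgr n) (hgr m)
      have hb := hbound _ _ hd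
      have he : M (xs n - xs m) + (vs n - vs m) = g n - g m := by
        rw [map_sub, ← hfe n, ← hfe m]; abel
      rw [he] at hb
      rw [dist_eq_norm, dist_eq_norm]
      rw [div_mul_eq_mul_div, one_mul, le_div_iff₀ hlam]
      nlinarith [hb]
    have hxc : CauchySeq xs := by
      have hgc : CauchySeq g := hgf.cauchySeq
      rw [Metric.cauchySeq_iff] at hgc ⊢
      intro ε hε
      obtain ⟨N, hN⟩ := hgc (lam * ε) (by positivity)
      refine ⟨N, fun n hn m hm => lt_of_le_of_lt (key n m) ?_⟩
      have h := hN n hn m hm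
      calc (1 / lam) * dist (g n) (g m) < (1 / lam) * (lam * ε) := by
            apply mul_lt_mul_of_pos_left h (by positivity)
        _ = ε := by field_simp
    obtain ⟨x, hx⟩ := cauchySeq_tendsto_of_complete hxc
    have hv : Tendsto (fun n => g n - M (xs n)) atTop (𝓝 (f - M x)) :=
      hgf.sub ((M.continuous.tendsto x).comp hx)
    have hgr2 : ∀ n, (xs n, g n - M (xs n)) ∈ A.graph := by
      intro n
      have hvn : vs n = g n - M (xs n) := by rw [← hfe n]; abel
      rw [← hvn]; exact hgr n
    have hmem : (x, f - M x) ∈ A.graph :=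
      hclosed.mem_of_tendsto (hx.prodMk_nhds hv)
        (Filter.Eventually.of_forall hgr2)
    exact (hmemS f).mpr ⟨x, f - M x, hmem, by abel⟩
  -- the orthogonal complement of the range vanishes
  have hOrth : Sᗮ = ⊥ := by
    rw [Submodule.eq_bot_iff]
    intro f hf
    rw [Submodule.mem_orthogonal] at hf
    set Md := ContinuousLinearMap.adjoint M with hMd
    have hfg : (f, Md f) ∈ A.graph := by
      have h := (hskew f (-(Md f))).mpr ?_
      · rwa [neg_neg] at h
      · intro u v huv
        have h0 : ⟪M u + v, f⟫ = 0 := hf _ ((hmemS _).mpr ⟨u, v, huv, rfl⟩)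
        rw [inner_add_left] at h0
        have h1 : ⟪M u, f⟫ = ⟪u, Md f⟫ :=
          (ContinuousLinearMap.adjoint_inner_right M u f).symm
        have h2 : ⟪u, Md f⟫ = -⟪v, f⟫ := by linear_combination h1.symm + h0
        have h3 := congrArg (starRingEnd ℂ) h2
        rw [inner_conj_symm, map_neg, inner_conj_symm] at h3
        rw [inner_neg_left, h3, neg_neg]
    have h0 : ⟪M f + Md f, f⟫ = 0 :=
      hf _ ((hmemS _).mpr ⟨f, Md f, hfg, rfl⟩)
    rw [inner_add_left, ContinuousLinearMap.adjoint_inner_left] at h0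
    have h1 := congrArg Complex.re h0
    have hsym : (⟪M f, f⟫).re = (⟪f, M f⟫).re := by
      rw [← inner_conj_symm f (M f)]; exact (Complex.conj_re _).symm
    rw [Complex.add_re, Complex.zero_re, hsym] at h1
    have h2 := hM f
    have hle : lam * ‖f‖ ^ 2 ≤ lam * 0 := by rw [mul_zero]; linarith
    have hsq2 : ‖f‖ ^ 2 ≤ 0 := (mul_le_mul_iff_right₀ hlam).mp hle
    have h3 : ‖f‖ ^ 2 = 0 := le_antisymm hsq2 (by positivity)
    have h4 : ‖f‖ = 0 := by
      have := h3
      nlinarith [norm_nonneg f, sq_abs ‖f‖]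
    simpa [norm_eq_zero] using h4
  -- hence the range is everything
  have hStop : S = ⊤ := by
    have h1 : S.topologicalClosure = ⊤ :=
      Submodule.topologicalClosure_eq_top_iff.mpr hOrth
    have h2 : S.topologicalClosure = S :=
      SetLike.ext' (by rw [Submodule.topologicalClosure_coe, hSclosed.closure_eq])
    rw [← h2, h1]
  constructor
  · intro fH
    have hf : fH ∈ S := hStop ▸ Submodule.mem_top
    obtain ⟨x, v, hxv, he⟩ := (hmemS fH).mp hf
    refine ⟨(x, v), ⟨hxv, he⟩, ?_⟩
    rintro ⟨x', v'⟩ ⟨hxv', he'⟩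
    have hd : (x' - x, v' - v) ∈ A.graph := A.graph.sub_mem hxv' hxv
    have hz : M (x' - x) + (v' - v) = 0 := by
      rw [map_sub]
      have : M x' + v' - (M x + v) = 0 := by rw [he, he']; simp
      calc M x' - M x + (v' - v) = M x' + v' - (M x + v) := by abel
        _ = 0 := this
    have hb := hbound _ _ hd
    rw [hz, norm_zero] at hb
    have hx0 : x' = x := by
      have hn : ‖x' - x‖ = 0 := by nlinarith [norm_nonneg (x' - x)]
      rw [norm_eq_zero, sub_eq_zero] at hn
      exact hn
    have hv0 : v' = v := by
      have he2 : M x' + v' = fH := he'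
      rw [hx0] at he2
      exact add_left_cancel (he2.trans he.symm)
    exact Prod.ext hx0 hv0
  · intro fH x v hxv he
    have hb := hbound x v hxv
    rw [he] at hb
    have hvle : ‖v‖ ≤ ‖fH‖ + ‖M‖ * ‖x‖ := by
      have hveq : v = fH - M x := eq_sub_of_add_eq' he
      rw [hveq]
      exact le_trans (norm_sub_le _ _) (by gcongr; exact M.le_opNorm x)
    have hsq : Real.sqrt (‖x‖ ^ 2 + ‖v‖ ^ 2) ≤ ‖x‖ + ‖v‖ := by
      rw [show ‖x‖ + ‖v‖ = Real.sqrt ((‖x‖ + ‖v‖) ^ 2) from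
        (Real.sqrt_sq (by positivity)).symm]
      apply Real.sqrt_le_sqrt
      nlinarith [mul_nonneg (norm_nonneg x) (norm_nonneg v)]
    refine hsq.trans ?_
    rw [div_mul_eq_mul_div, le_div_iff₀ hlam]
    have hM0 : (0:ℝ) ≤ ‖M‖ := norm_nonneg _
    have h3 : ‖M‖ * (lam * ‖x‖) ≤ ‖M‖ * ‖fH‖ := mul_le_mul_of_nonneg_left hb hM0
    have h4 : lam * ‖v‖ ≤ lam * (‖fH‖ + ‖M‖ * ‖x‖) :=
      mul_le_mul_of_nonneg_left hvle hlam.le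
    nlinarith [h3, h4, hb]

end DtNPaper
end
end

section
/- Let a be a coercive bounded operator on H₁ and m a coercive bounded operator on H₀. Then: (i) the block operators (m, −D̊; −G, a⁻¹) with domain dom(G) × dom(D̊) and (m, −D; −G̊, a⁻¹) with domain dom(G̊) × dom(D) are both bijective onto H₀ × H₁; (ii) the inverse of the first block operator is bounded from H₀ × H₁ into dom(G) × dom(D̊) (graph norms); (iii) the inverse of the second block operator is bounded from H₀ × H₁ into dom(G̊) × dom(D) (graph norms). -/
open Filter Topology

noncomputable section

namespace DtNPaper

local notation "⟪" x ", " y "⟫" => (inner ℂ x y : ℂ)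

lemma coercive_inv {H₁ : Type*} [NormedAddCommGroup H₁] [InnerProductSpace ℂ H₁]
    (a ainv : H₁ →L[ℂ] H₁) (ha : Coercive a)
    (hainv : ∀ x, ainv (a x) = x ∧ a (ainv x) = x) : Coercive ainv := by
  obtain ⟨μ, hμ, ha'⟩ := ha
  refine ⟨μ / (‖a‖ + 1) ^ 2, by positivity, fun x => ?_⟩
  set y := ainv x with hy
  have hxy : x = a y := ((hainv x).2).symm
  have h1 : (⟪x, ainv x⟫).re = (⟪y, a y⟫).re := by
    rw [← hy, hxy, ← inner_conj_symm]
    exact Complex.conj_re _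
  have h2 : ‖x‖ ≤ (‖a‖ + 1) * ‖y‖ := by
    rw [hxy]
    calc ‖a y‖ ≤ ‖a‖ * ‖y‖ := a.le_opNorm y
      _ ≤ (‖a‖ + 1) * ‖y‖ := by nlinarith [norm_nonneg y]
  have h3 : ‖x‖ ^ 2 ≤ (‖a‖ + 1) ^ 2 * ‖y‖ ^ 2 := by nlinarith [norm_nonneg x, norm_nonneg y]
  calc μ / (‖a‖ + 1) ^ 2 * ‖x‖ ^ 2 ≤ μ / (‖a‖ + 1) ^ 2 * ((‖a‖ + 1) ^ 2 * ‖y‖ ^ 2) := by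
        apply mul_le_mul_of_nonneg_left h3 (by positivity)
    _ = μ * ‖y‖ ^ 2 := by field_simp
    _ ≤ (⟪y, a y⟫).re := ha' y
    _ = (⟪x, ainv x⟫).re := h1.symm


section Aux

variable {H₀ H₁ HS : Type*}
  [NormedAddCommGroup H₀] [InnerProductSpace ℂ H₀] [CompleteSpace H₀]
  [NormedAddCommGroup H₁] [InnerProductSpace ℂ H₁] [CompleteSpace H₁]

lemma reInner_le (u : H₀) (x : H₀) : (⟪u, x⟫).re ≤ ‖u‖ * ‖x‖ :=
  le_trans (Complex.re_le_norm _) (by exact norm_inner_le_norm _ _)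

lemma coreEst (A : Submodule ℂ (H₀ × H₁)) (B : Submodule ℂ (H₁ × H₀))
    (m : H₀ →L[ℂ] H₀) (ainv : H₁ →L[ℂ] H₁)
    {μm μa : ℝ} (hμm : 0 < μm) (hμa : 0 < μa)
    (hmco : ∀ x, μm * ‖x‖ ^ 2 ≤ (⟪x, m x⟫).re)
    (haco : ∀ x, μa * ‖x‖ ^ 2 ≤ (⟪x, ainv x⟫).re)
    (hpair : ∀ u p q w, (u, p) ∈ A → (q, w) ∈ B → ⟪w, u⟫ = -⟪q, p⟫)
    (u : H₀) (p : H₁) (q : H₁) (w : H₀) (hA : (u, p) ∈ A) (hB : (q, w) ∈ B) :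
    (min μm μa) ^ 2 * (‖u‖ ^ 2 + ‖q‖ ^ 2) ≤ ‖m u - w‖ ^ 2 + ‖ainv q - p‖ ^ 2 := by
  set ν := min μm μa with hν
  have hν0 : 0 < ν := lt_min hμm hμa
  have h1 : ⟪w, u⟫ = -⟪q, p⟫ := hpair u p q w hA hB
  have e2 : (⟪u, w⟫).re = -(⟪q, p⟫).re := by
    rw [← inner_conj_symm, h1]
    simp only [map_neg, Complex.neg_re, neg_inj]
    rw [← inner_conj_symm q p]
    exact Complex.conj_re _
  have e3 : (⟪u, m u - w⟫).re + (⟪q, ainv q - p⟫).re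
      = (⟪u, m u⟫).re + (⟪q, ainv q⟫).re := by
    rw [inner_sub_right, inner_sub_right]
    simp only [Complex.sub_re]
    rw [e2]; ring
  have hb1 : (⟪u, m u - w⟫).re ≤ ‖u‖ * ‖m u - w‖ := reInner_le _ _
  have hb2 : (⟪q, ainv q - p⟫).re ≤ ‖q‖ * ‖ainv q - p‖ := reInner_le _ _
  have step1 : ν * (‖u‖ ^ 2 + ‖q‖ ^ 2) ≤ ‖u‖ * ‖m u - w‖ + ‖q‖ * ‖ainv q - p‖ := by
    have := hmco u; have := haco q
    have hνm : ν ≤ μm := min_le_left _ _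
    have hνa : ν ≤ μa := min_le_right _ _
    nlinarith [sq_nonneg ‖u‖, sq_nonneg ‖q‖]
  have step2 : ν * (ν * (‖u‖ ^ 2 + ‖q‖ ^ 2)) ≤
      ν * (‖u‖ * ‖m u - w‖ + ‖q‖ * ‖ainv q - p‖) :=
    mul_le_mul_of_nonneg_left step1 hν0.le
  nlinarith [sq_nonneg (ν * ‖u‖ - ‖m u - w‖), sq_nonneg (ν * ‖q‖ - ‖ainv q - p‖)]


lemma boundEst (A : Submodule ℂ (H₀ × H₁)) (B : Submodule ℂ (H₁ × H₀))
    (m : H₀ →L[ℂ] H₀) (ainv : H₁ →L[ℂ] H₁)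
    {μm μa : ℝ} (hμm : 0 < μm) (hμa : 0 < μa)
    (hmco : ∀ x, μm * ‖x‖ ^ 2 ≤ (⟪x, m x⟫).re)
    (haco : ∀ x, μa * ‖x‖ ^ 2 ≤ (⟪x, ainv x⟫).re)
    (hpair : ∀ u p q w, (u, p) ∈ A → (q, w) ∈ B → ⟪w, u⟫ = -⟪q, p⟫) :
    ∃ C : ℝ, 0 < C ∧ ∀ u p q w, (u, p) ∈ A → (q, w) ∈ B →
      ‖u‖ ^ 2 + ‖p‖ ^ 2 + ‖q‖ ^ 2 + ‖w‖ ^ 2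
        ≤ C * (‖m u - w‖ ^ 2 + ‖ainv q - p‖ ^ 2) := by
  set ν := min μm μa with hνdef
  have hν0 : 0 < ν := lt_min hμm hμa
  refine ⟨(1 + 2 * ‖ainv‖ ^ 2 + 2 * ‖m‖ ^ 2) * (1 / ν ^ 2) + 4, by positivity,
    fun u p q w hA hB => ?_⟩
  set f := m u - w with hf
  set g := ainv q - p with hg
  have ht : ν ^ 2 * (‖u‖ ^ 2 + ‖q‖ ^ 2) ≤ ‖f‖ ^ 2 + ‖g‖ ^ 2 :=
    coreEst A B m ainv hμm hμa hmco haco hpair u p q w hA hB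
  have hν2 : (0:ℝ) < ν ^ 2 := by positivity
  have ht' : ‖u‖ ^ 2 + ‖q‖ ^ 2 ≤ 1 / ν ^ 2 * (‖f‖ ^ 2 + ‖g‖ ^ 2) := by
    rw [one_div, inv_mul_eq_div, le_div_iff₀ hν2]
    linarith [ht]
  have hw : ‖w‖ ≤ ‖m‖ * ‖u‖ + ‖f‖ := by
    have : w = m u - f := by rw [hf]; abel
    rw [this]
    calc ‖m u - f‖ ≤ ‖m u‖ + ‖f‖ := norm_sub_le _ _
      _ ≤ ‖m‖ * ‖u‖ + ‖f‖ := by linarith [m.le_opNorm u]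
  have hp : ‖p‖ ≤ ‖ainv‖ * ‖q‖ + ‖g‖ := by
    have : p = ainv q - g := by rw [hg]; abel
    rw [this]
    calc ‖ainv q - g‖ ≤ ‖ainv q‖ + ‖g‖ := norm_sub_le _ _
      _ ≤ ‖ainv‖ * ‖q‖ + ‖g‖ := by linarith [ainv.le_opNorm q]
  have hw2 : ‖w‖ ^ 2 ≤ 2 * ‖m‖ ^ 2 * ‖u‖ ^ 2 + 2 * ‖f‖ ^ 2 := by
    nlinarith [mul_self_le_mul_self (norm_nonneg w) hw, sq_nonneg (‖m‖ * ‖u‖ - ‖f‖)]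
  have hp2 : ‖p‖ ^ 2 ≤ 2 * ‖ainv‖ ^ 2 * ‖q‖ ^ 2 + 2 * ‖g‖ ^ 2 := by
    nlinarith [mul_self_le_mul_self (norm_nonneg p) hp, sq_nonneg (‖ainv‖ * ‖q‖ - ‖g‖)]
  have hmul : (1 + 2 * ‖ainv‖ ^ 2 + 2 * ‖m‖ ^ 2) * (‖u‖ ^ 2 + ‖q‖ ^ 2)
      ≤ (1 + 2 * ‖ainv‖ ^ 2 + 2 * ‖m‖ ^ 2) * (1 / ν ^ 2 * (‖f‖ ^ 2 + ‖g‖ ^ 2)) :=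
    mul_le_mul_of_nonneg_left ht' (by positivity)
  nlinarith [sq_nonneg ‖u‖, sq_nonneg ‖q‖, sq_nonneg ‖f‖, sq_nonneg ‖g‖,
    mul_nonneg (sq_nonneg ‖ainv‖) (sq_nonneg ‖u‖), mul_nonneg (sq_nonneg ‖m‖) (sq_nonneg ‖q‖)]


lemma sqrt_helper {a c t : ℝ} (ha : 0 ≤ a) (hc : 0 ≤ c) (ht : 0 ≤ t)
    (h : a ^ 2 ≤ c * t ^ 2) : a ≤ Real.sqrt c * t := by
  have h2 : a ^ 2 ≤ (Real.sqrt c * t) ^ 2 := by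
    rw [mul_pow, Real.sq_sqrt hc]; exact h
  have h3 := Real.sqrt_le_sqrt h2
  rwa [Real.sqrt_sq ha, Real.sqrt_sq (by positivity)] at h3

set_option maxHeartbeats 1000000 in
lemma blockSolve (A : Submodule ℂ (H₀ × H₁)) (B : Submodule ℂ (H₁ × H₀))
    (hAc : IsClosed (A : Set (H₀ × H₁))) (hBc : IsClosed (B : Set (H₁ × H₀)))
    (m : H₀ →L[ℂ] H₀) (ainv : H₁ →L[ℂ] H₁)
    (hm : Coercive m) (hai : Coercive ainv)
    (hpair : ∀ u p q w, (u, p) ∈ A → (q, w) ∈ B → ⟪w, u⟫ = -⟪q, p⟫)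
    (horth : ∀ (f : H₀) (g : H₁), (∀ u p, (u, p) ∈ A → ⟪f, m u⟫ = ⟪g, p⟫) →
      (∀ q w, (q, w) ∈ B → ⟪f, w⟫ = ⟪g, ainv q⟫) → f = 0 ∧ g = 0) :
    (∀ (f : H₀) (g : H₁), ∃! z : (H₀ × H₁) × (H₁ × H₀),
      z.1 ∈ A ∧ z.2 ∈ B ∧ m z.1.1 - z.2.2 = f ∧ ainv z.2.1 - z.1.2 = g) ∧
    (∃ C : ℝ, ∀ f g u p q w, (u, p) ∈ A → (q, w) ∈ B →
      m u - w = f → ainv q - p = g →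
      ‖u‖ ^ 2 + ‖p‖ ^ 2 + ‖q‖ ^ 2 + ‖w‖ ^ 2 ≤ C * (‖f‖ ^ 2 + ‖g‖ ^ 2)) := by
  obtain ⟨μm, hμm, hmco⟩ := hm
  obtain ⟨μa, hμa, haco⟩ := hai
  obtain ⟨C, hC0, hC⟩ := boundEst A B m ainv hμm hμa hmco haco hpair
  -- homogeneous solutions vanish
  have hzero : ∀ z : (H₀ × H₁) × (H₁ × H₀), z.1 ∈ A → z.2 ∈ B →
      m z.1.1 - z.2.2 = 0 → ainv z.2.1 - z.1.2 = 0 → z = 0 := by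
    rintro ⟨⟨u, p⟩, q, w⟩ h1 h2 h3 h4
    have h0 : ‖u‖ ^ 2 + ‖p‖ ^ 2 + ‖q‖ ^ 2 + ‖w‖ ^ 2 ≤ 0 := by
      simpa [h3, h4] using hC u p q w h1 h2
    have hu : u = 0 := by
      have : ‖u‖ ^ 2 = 0 := le_antisymm
        (by nlinarith [sq_nonneg ‖p‖, sq_nonneg ‖q‖, sq_nonneg ‖w‖]) (sq_nonneg _)
      simpa using (pow_eq_zero_iff (two_ne_zero)).mp this
    have hp : p = 0 := by
      have : ‖p‖ ^ 2 = 0 := le_antisymm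
        (by nlinarith [sq_nonneg ‖u‖, sq_nonneg ‖q‖, sq_nonneg ‖w‖]) (sq_nonneg _)
      simpa using (pow_eq_zero_iff (two_ne_zero)).mp this
    have hq : q = 0 := by
      have : ‖q‖ ^ 2 = 0 := le_antisymm
        (by nlinarith [sq_nonneg ‖p‖, sq_nonneg ‖u‖, sq_nonneg ‖w‖]) (sq_nonneg _)
      simpa using (pow_eq_zero_iff (two_ne_zero)).mp this
    have hw : w = 0 := by
      have : ‖w‖ ^ 2 = 0 := le_antisymm
        (by nlinarith [sq_nonneg ‖p‖, sq_nonneg ‖q‖, sq_nonneg ‖u‖]) (sq_nonneg _)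
      simpa using (pow_eq_zero_iff (two_ne_zero)).mp this
    simp [hu, hp, hq, hw, Prod.ext_iff]
  -- the domain as a closed (hence complete) submodule
  set K : Submodule ℂ ((H₀ × H₁) × (H₁ × H₀)) := A.prod B with hKdef
  have hKc : IsClosed (K : Set ((H₀ × H₁) × (H₁ × H₀))) := by
    have : (K : Set ((H₀ × H₁) × (H₁ × H₀))) = (A : Set _) ×ˢ (B : Set _) := by
      ext x; simp [hKdef, Submodule.mem_prod, Set.mem_prod]
    rw [this]; exact hAc.prod hBc
  haveI : CompleteSpace K := hKc.completeSpace_coe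
  -- the block operator as a continuous linear map on K
  let Tl : K →ₗ[ℂ] H₀ × H₁ :=
    { toFun := fun k => (m k.1.1.1 - k.1.2.2, ainv k.1.2.1 - k.1.1.2)
      map_add' := by
        intro x y
        simp only [Submodule.coe_add, Prod.fst_add, Prod.snd_add, map_add, Prod.mk_add_mk,
          Prod.mk.injEq]
        constructor <;> abel
      map_smul' := by
        intro c x
        simp only [Submodule.coe_smul, Prod.smul_fst, Prod.smul_snd, map_smul, RingHom.id_apply,
          Prod.smul_mk, Prod.mk.injEq, smul_sub] }
  have hTlcont : Continuous Tl := by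
    apply Continuous.prodMk
    · exact (m.continuous.comp ((continuous_fst.comp continuous_fst).comp
        continuous_subtype_val)).sub
        ((continuous_snd.comp continuous_snd).comp continuous_subtype_val)
    · exact (ainv.continuous.comp ((continuous_fst.comp continuous_snd).comp
        continuous_subtype_val)).sub
        ((continuous_snd.comp continuous_fst).comp continuous_subtype_val)
  let T : K →L[ℂ] H₀ × H₁ := ⟨Tl, hTlcont⟩
  -- antilipschitz bound
  have hTb : ∀ k : K, ‖k‖ ≤ Real.sqrt (2 * C) * ‖T k‖ := by
    rintro ⟨⟨⟨u, p⟩, q, w⟩, hk⟩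
    obtain ⟨hk1, hk2⟩ : (u, p) ∈ A ∧ (q, w) ∈ B := Submodule.mem_prod.mp hk
    have hTk : T ⟨((u, p), q, w), hk⟩ = (m u - w, ainv q - p) := rfl
    have hb := hC u p q w hk1 hk2
    have hfg : ‖m u - w‖ ^ 2 + ‖ainv q - p‖ ^ 2 ≤ 2 * ‖T ⟨((u, p), q, w), hk⟩‖ ^ 2 := by
      have h1 : ‖m u - w‖ ≤ ‖T ⟨((u, p), q, w), hk⟩‖ := by
        rw [hTk]; exact norm_fst_le (m u - w, ainv q - p)
      have h2 : ‖ainv q - p‖ ≤ ‖T ⟨((u, p), q, w), hk⟩‖ := by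
        rw [hTk]; exact norm_snd_le (m u - w, ainv q - p)
      nlinarith [norm_nonneg (m u - w), norm_nonneg (ainv q - p),
        norm_nonneg (T ⟨((u, p), q, w), hk⟩)]
    have hsum : ‖u‖ ^ 2 + ‖p‖ ^ 2 + ‖q‖ ^ 2 + ‖w‖ ^ 2
        ≤ 2 * C * ‖T ⟨((u, p), q, w), hk⟩‖ ^ 2 := by nlinarith
    have hnk : ‖(⟨((u, p), q, w), hk⟩ : K)‖ = max (max ‖u‖ ‖p‖) (max ‖q‖ ‖w‖) := by
      rw [show ‖(⟨((u, p), q, w), hk⟩ : K)‖ = ‖(((u, p), q, w) : (H₀ × H₁) × (H₁ × H₀))‖ from rfl,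
        Prod.norm_def, Prod.norm_def, Prod.norm_def]
    rw [hnk]
    set t := ‖T ⟨((u, p), q, w), hk⟩‖ with htdef
    have hT0 : (0:ℝ) ≤ t := norm_nonneg _
    have h2C : (0:ℝ) ≤ 2 * C := by positivity
    have l1 : ‖u‖ ≤ Real.sqrt (2 * C) * t := sqrt_helper (norm_nonneg _) h2C hT0
      (by nlinarith [sq_nonneg ‖p‖, sq_nonneg ‖q‖, sq_nonneg ‖w‖])
    have l2 : ‖p‖ ≤ Real.sqrt (2 * C) * t := sqrt_helper (norm_nonneg _) h2C hT0
      (by nlinarith [sq_nonneg ‖u‖, sq_nonneg ‖q‖, sq_nonneg ‖w‖])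
    have l3 : ‖q‖ ≤ Real.sqrt (2 * C) * t := sqrt_helper (norm_nonneg _) h2C hT0
      (by nlinarith [sq_nonneg ‖p‖, sq_nonneg ‖u‖, sq_nonneg ‖w‖])
    have l4 : ‖w‖ ≤ Real.sqrt (2 * C) * t := sqrt_helper (norm_nonneg _) h2C hT0
      (by nlinarith [sq_nonneg ‖p‖, sq_nonneg ‖q‖, sq_nonneg ‖u‖])
    exact max_le (max_le l1 l2) (max_le l3 l4)
  have hanti : AntilipschitzWith (Real.toNNReal (Real.sqrt (2 * C))) T :=
    T.antilipschitz_of_bound (by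
      intro k
      rw [Real.coe_toNNReal _ (Real.sqrt_nonneg _)]
      exact hTb k)
  have hclosed : IsClosed ((LinearMap.range (T : K →ₗ[ℂ] H₀ × H₁) : Submodule ℂ (H₀ × H₁)) : Set (H₀ × H₁)) := by
    have := hanti.isClosed_range T.uniformContinuous
    simpa only [LinearMap.coe_range, ContinuousLinearMap.coe_coe] using this
  -- pass to the L² product space
  let e := WithLp.prodContinuousLinearEquiv 2 ℂ H₀ H₁
  let R : Submodule ℂ (WithLp 2 (H₀ × H₁)) :=
    (LinearMap.range (T : K →ₗ[ℂ] H₀ × H₁)).comap (e.toLinearEquiv.toLinearMap)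
  have hRc : IsClosed (R : Set (WithLp 2 (H₀ × H₁))) := by
    have : (R : Set (WithLp 2 (H₀ × H₁)))
        = ⇑e ⁻¹' ((LinearMap.range (T : K →ₗ[ℂ] H₀ × H₁) : Submodule ℂ (H₀ × H₁)) : Set (H₀ × H₁)) := rfl
    rw [this]; exact hclosed.preimage e.continuous
  haveI : CompleteSpace R := hRc.completeSpace_coe
  have hmemR : ∀ k : K, e.symm (T k) ∈ R := by
    intro k
    have : e.toLinearEquiv.toLinearMap (e.symm (T k)) = T k := e.apply_symm_apply _
    exact Submodule.mem_comap.mpr (this ▸ LinearMap.mem_range_self _ k)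
  have htop : R = ⊤ := by
    apply Submodule.orthogonal_eq_bot_iff.mp
    apply (Submodule.eq_bot_iff _).mpr
    intro x hx
    have hx' : ∀ v ∈ R, ⟪x, v⟫ = 0 := fun v hv => (Submodule.mem_orthogonal' _ _).mp hx v hv
    set f := (WithLp.equiv 2 (H₀ × H₁) x).1 with hfdef
    set g := (WithLp.equiv 2 (H₀ × H₁) x).2 with hgdef
    have key : ∀ y : H₀ × H₁, (∃ k : K, T k = y) → ⟪f, y.1⟫ + ⟪g, y.2⟫ = 0 := by
      rintro y ⟨k, hk⟩
      have h0 := hx' _ (hmemR k)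
      rw [hk] at h0
      rw [← h0]
      rw [WithLp.prod_inner_apply]
      congr 1
    have h1 : ∀ u p, (u, p) ∈ A → ⟪f, m u⟫ = ⟪g, p⟫ := by
      intro u p hup
      have hk : (((u, p), (0, 0)) : (H₀ × H₁) × (H₁ × H₀)) ∈ K :=
        Submodule.mem_prod.mpr ⟨hup, Submodule.zero_mem B⟩
      have := key (m u, -p) ⟨⟨_, hk⟩, by
        show (m u - 0, ainv 0 - p) = (m u, -p)
        simp⟩
      simp only [inner_neg_right] at this
      linear_combination this
    have h2 : ∀ q w, (q, w) ∈ B → ⟪f, w⟫ = ⟪g, ainv q⟫ := by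
      intro q w hqw
      have hk : (((0, 0), (q, w)) : (H₀ × H₁) × (H₁ × H₀)) ∈ K :=
        Submodule.mem_prod.mpr ⟨Submodule.zero_mem A, hqw⟩
      have := key (-w, ainv q) ⟨⟨_, hk⟩, by
        show (m 0 - w, ainv q - 0) = (-w, ainv q)
        simp⟩
      simp only [inner_neg_right] at this
      linear_combination -this
    obtain ⟨hf0, hg0⟩ := horth f g h1 h2
    apply e.injective
    rw [map_zero]
    have : e x = (f, g) := rfl
    rw [this, hf0, hg0]
    rfl
  have hexist : ∀ (f : H₀) (g : H₁), ∃ k : K, T k = (f, g) := by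
    intro f g
    have hx : (WithLp.equiv 2 (H₀ × H₁)).symm (f, g) ∈ R := htop ▸ Submodule.mem_top
    have := Submodule.mem_comap.mp hx
    obtain ⟨k, hk⟩ := this
    refine ⟨k, ?_⟩
    change (T : K →ₗ[ℂ] H₀ × H₁) k = _; rw [hk]
    rfl
  constructor
  · intro f g
    obtain ⟨⟨⟨⟨u, p⟩, q, w⟩, hk⟩, hTk⟩ := hexist f g
    obtain ⟨hk1, hk2⟩ : (u, p) ∈ A ∧ (q, w) ∈ B := Submodule.mem_prod.mp hk
    have hTk' : (m u - w, ainv q - p) = (f, g) := hTk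
    refine ⟨((u, p), (q, w)), ⟨hk1, hk2, congrArg Prod.fst hTk', congrArg Prod.snd hTk'⟩, ?_⟩
    rintro ⟨⟨u', p'⟩, q', w'⟩ ⟨h1', h2', h3', h4'⟩
    have hdiff := hzero ((u' - u, p' - p), (q' - q, w' - w))
      (Submodule.sub_mem A h1' hk1) (Submodule.sub_mem B h2' hk2)
      (by
        have e1 : m u - w = f := congrArg Prod.fst hTk'
        simp only [map_sub]
        rw [show m u' - m u - (w' - w) = (m u' - w') - (m u - w) by abel, h3', e1, sub_self])
      (by
        have e2 : ainv q - p = g := congrArg Prod.snd hTk'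
        simp only [map_sub]
        rw [show ainv q' - ainv q - (p' - p) = (ainv q' - p') - (ainv q - p) by abel, h4', e2,
          sub_self])
    simp only [Prod.ext_iff, Prod.mk_eq_zero] at hdiff
    obtain ⟨⟨a1, a2⟩, a3, a4⟩ := hdiff
    simp [Prod.ext_iff, sub_eq_zero.mp a1, sub_eq_zero.mp a2, sub_eq_zero.mp a3,
      sub_eq_zero.mp a4]
  · refine ⟨C, fun f g u p q w hA' hB' hf hg => ?_⟩
    rw [← hf, ← hg]
    exact hC u p q w hA' hB'


end Aux

variable {H₀ H₁ HS : Type*}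
  [NormedAddCommGroup H₀] [InnerProductSpace ℂ H₀] [CompleteSpace H₀]
  [NormedAddCommGroup H₁] [InnerProductSpace ℂ H₁] [CompleteSpace H₁]

/-- Lemma 2.11: invertibility and boundedness of the inverses of the block
operators `(m, -D̊; -G, a⁻¹)` on `dom G × dom D̊` and `(m, -D; -G̊, a⁻¹)` on
`dom G̊ × dom D`. -/
theorem statement4
    (G Gi : H₀ →ₗ.[ℂ] H₁) (D Di : H₁ →ₗ.[ℂ] H₀)
    (hGdense : Dense (G.domain : Set H₀)) (hDdense : Dense (D.domain : Set H₁))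
    (hGclosed : IsClosed (G.graph : Set (H₀ × H₁)))
    (hDclosed : IsClosed (D.graph : Set (H₁ × H₀)))
    (hGi : ∀ u w, (u, w) ∈ Gi.graph ↔ ∀ q s, (q, s) ∈ D.graph → ⟪w, q⟫ = -⟪u, s⟫)
    (hDi : ∀ q w, (q, w) ∈ Di.graph ↔ ∀ u p, (u, p) ∈ G.graph → ⟪w, u⟫ = -⟪q, p⟫)
    (hGiG : Gi.graph ≤ G.graph) (hDiD : Di.graph ≤ D.graph)
    (a : H₁ →L[ℂ] H₁) (m : H₀ →L[ℂ] H₀)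
    (ha : Coercive a) (hm : Coercive m)
    (ainv : H₁ →L[ℂ] H₁) (hainv : ∀ x, ainv (a x) = x ∧ a (ainv x) = x) :
    -- (i) the block operator (m, -D̊; -G, a⁻¹) on dom G × dom D̊ is bijective
    (∀ (f : H₀) (g : H₁), ∃! z : (H₀ × H₁) × (H₁ × H₀),
      z.1 ∈ G.graph ∧ z.2 ∈ Di.graph ∧
      m z.1.1 - z.2.2 = f ∧ ainv z.2.1 - z.1.2 = g) ∧
    -- (i) the block operator (m, -D; -G̊, a⁻¹) on dom G̊ × dom D is bijective
    (∀ (f : H₀) (g : H₁), ∃! z : (H₀ × H₁) × (H₁ × H₀),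
      z.1 ∈ Gi.graph ∧ z.2 ∈ D.graph ∧
      m z.1.1 - z.2.2 = f ∧ ainv z.2.1 - z.1.2 = g) ∧
    -- (ii) the inverse of the first is bounded into dom G × dom D̊ (graph norms)
    (∃ C : ℝ, ∀ f g u p q w, (u, p) ∈ G.graph → (q, w) ∈ Di.graph →
      m u - w = f → ainv q - p = g →
      ‖u‖ ^ 2 + ‖p‖ ^ 2 + ‖q‖ ^ 2 + ‖w‖ ^ 2 ≤ C * (‖f‖ ^ 2 + ‖g‖ ^ 2)) ∧
    -- (iii) the inverse of the second is bounded into dom G̊ × dom D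
    (∃ C : ℝ, ∀ f g u p q w, (u, p) ∈ Gi.graph → (q, w) ∈ D.graph →
      m u - w = f → ainv q - p = g →
      ‖u‖ ^ 2 + ‖p‖ ^ 2 + ‖q‖ ^ 2 + ‖w‖ ^ 2 ≤ C * (‖f‖ ^ 2 + ‖g‖ ^ 2)) := by
  -- derived facts
  have hainvco : Coercive ainv := coercive_inv a ainv ha hainv
  -- closedness of the graphs of the minimal operators
  have hGic : IsClosed (Gi.graph : Set (H₀ × H₁)) := by
    have hset : (Gi.graph : Set (H₀ × H₁)) =
        ⋂ y ∈ (D.graph : Set (H₁ × H₀)), {x : H₀ × H₁ | ⟪x.2, y.1⟫ = -⟪x.1, y.2⟫} := by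
      ext x
      simp only [Set.mem_iInter, Set.mem_setOf_eq, SetLike.mem_coe]
      constructor
      · intro hx y hy
        exact (hGi x.1 x.2).mp (by rwa [Prod.mk.eta]) y.1 y.2 (by rwa [Prod.mk.eta])
      · intro hx
        rw [← Prod.mk.eta (p := x)]
        exact (hGi x.1 x.2).mpr fun q s hqs => hx (q, s) hqs
    rw [hset]
    exact isClosed_biInter fun y hy => isClosed_eq
      (Continuous.inner continuous_snd continuous_const)
      ((Continuous.inner continuous_fst continuous_const).neg)
  have hDic : IsClosed (Di.graph : Set (H₁ × H₀)) := by
    have hset : (Di.graph : Set (H₁ × H₀)) =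
        ⋂ y ∈ (G.graph : Set (H₀ × H₁)), {x : H₁ × H₀ | ⟪x.2, y.1⟫ = -⟪x.1, y.2⟫} := by
      ext x
      simp only [Set.mem_iInter, Set.mem_setOf_eq, SetLike.mem_coe]
      constructor
      · intro hx y hy
        exact (hDi x.1 x.2).mp (by rwa [Prod.mk.eta]) y.1 y.2 (by rwa [Prod.mk.eta])
      · intro hx
        rw [← Prod.mk.eta (p := x)]
        exact (hDi x.1 x.2).mpr fun u p hup => hx (u, p) hup
    rw [hset]
    exact isClosed_biInter fun y hy => isClosed_eq
      (Continuous.inner continuous_snd continuous_const)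
      ((Continuous.inner continuous_fst continuous_const).neg)
  -- pairing identities
  have hpair1 : ∀ u p q w, (u, p) ∈ G.graph → (q, w) ∈ Di.graph → ⟪w, u⟫ = -⟪q, p⟫ :=
    fun u p q w hA hB => (hDi q w).mp hB u p hA
  have hpair2 : ∀ u p q w, (u, p) ∈ Gi.graph → (q, w) ∈ D.graph → ⟪w, u⟫ = -⟪q, p⟫ := by
    intro u p q w hu hq
    have h := (hGi u p).mp hu q w hq
    have h2 : ⟪q, p⟫ = -⟪w, u⟫ := by
      rw [← inner_conj_symm q p, h]
      simp
    linear_combination h2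
  -- orthogonality conditions imply vanishing
  have horth1 : ∀ (f : H₀) (g : H₁),
      (∀ u p, (u, p) ∈ G.graph → ⟪f, m u⟫ = ⟪g, p⟫) →
      (∀ q w, (q, w) ∈ Di.graph → ⟪f, w⟫ = ⟪g, ainv q⟫) → f = 0 ∧ g = 0 := by
    intro f g h1 h2
    have hmem : (-g, (ContinuousLinearMap.adjoint m) f) ∈ Di.graph := by
      apply (hDi _ _).mpr
      intro u p hup
      rw [ContinuousLinearMap.adjoint_inner_left, h1 u p hup]
      simp
    have heq := h2 (-g) _ hmem
    have hL : (⟪f, (ContinuousLinearMap.adjoint m) f⟫).re = (⟪f, m f⟫).re := by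
      rw [← inner_conj_symm, ContinuousLinearMap.adjoint_inner_left]
      exact Complex.conj_re _
    have hR : (⟪g, ainv (-g)⟫).re = -(⟪g, ainv g⟫).re := by
      simp
    have hre : (⟪f, m f⟫).re = -(⟪g, ainv g⟫).re := by rw [← hL, heq, hR]
    obtain ⟨μm, hμm, hmco⟩ := hm
    obtain ⟨μa, hμa, haco⟩ := hainvco
    have hcf := hmco f
    have hcg := haco g
    constructor
    · have hf2 : ‖f‖ ^ 2 ≤ 0 := by nlinarith [sq_nonneg ‖g‖]
      simpa using (pow_eq_zero_iff two_ne_zero).mp (le_antisymm hf2 (sq_nonneg _))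
    · have hg2 : ‖g‖ ^ 2 ≤ 0 := by nlinarith [sq_nonneg ‖f‖]
      simpa using (pow_eq_zero_iff two_ne_zero).mp (le_antisymm hg2 (sq_nonneg _))
  have horth2 : ∀ (f : H₀) (g : H₁),
      (∀ u p, (u, p) ∈ Gi.graph → ⟪f, m u⟫ = ⟪g, p⟫) →
      (∀ q w, (q, w) ∈ D.graph → ⟪f, w⟫ = ⟪g, ainv q⟫) → f = 0 ∧ g = 0 := by
    intro f g h1 h2
    have hmem : (-f, (ContinuousLinearMap.adjoint ainv) g) ∈ Gi.graph := by
      apply (hGi _ _).mpr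
      intro q s hqs
      rw [ContinuousLinearMap.adjoint_inner_left, ← h2 q s hqs]
      simp
    have heq := h1 (-f) _ hmem
    have hL : (⟪f, m (-f)⟫).re = -(⟪f, m f⟫).re := by
      simp
    have hR : (⟪g, (ContinuousLinearMap.adjoint ainv) g⟫).re = (⟪g, ainv g⟫).re := by
      rw [← inner_conj_symm, ContinuousLinearMap.adjoint_inner_left]
      exact Complex.conj_re _
    have hre : -(⟪f, m f⟫).re = (⟪g, ainv g⟫).re := by rw [← hL, heq, hR]
    obtain ⟨μm, hμm, hmco⟩ := hm
    obtain ⟨μa, hμa, haco⟩ := hainvco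
    have hcf := hmco f
    have hcg := haco g
    constructor
    · have hf2 : ‖f‖ ^ 2 ≤ 0 := by nlinarith [sq_nonneg ‖g‖]
      simpa using (pow_eq_zero_iff two_ne_zero).mp (le_antisymm hf2 (sq_nonneg _))
    · have hg2 : ‖g‖ ^ 2 ≤ 0 := by nlinarith [sq_nonneg ‖f‖]
      simpa using (pow_eq_zero_iff two_ne_zero).mp (le_antisymm hg2 (sq_nonneg _))
  obtain ⟨hbij1, hbd1⟩ := blockSolve G.graph Di.graph hGclosed hDic m ainv hm hainvco
    hpair1 horth1
  obtain ⟨hbij2, hbd2⟩ := blockSolve Gi.graph D.graph hGic hDclosed m ainv hm hainvco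
    hpair2 horth2
  exact ⟨hbij1, hbij2, hbd1, hbd2⟩


end DtNPaper
end
end

section
/- Let a be a coercive bounded operator on H₁ and m a coercive bounded operator on H₀. Let u₀ ∈ BD(G). Then there exists a unique u ∈ dom(G) such that aGu ∈ dom(D), mu − DaGu = 0 and u − u₀ ∈ dom(G̊). -/
open Filter Topology

noncomputable section

namespace DtNPaper

local notation "⟪" x ", " y "⟫" => (inner ℂ x y : ℂ)

variable {H₀ H₁ HS : Type*}
  [NormedAddCommGroup H₀] [InnerProductSpace ℂ H₀] [CompleteSpace H₀]
  [NormedAddCommGroup H₁] [InnerProductSpace ℂ H₁] [CompleteSpace H₁]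

/-- A coercive bounded operator on a complex Hilbert space is surjective. -/
lemma coercive_surj {E : Type*} [NormedAddCommGroup E] [InnerProductSpace ℂ E]
    [CompleteSpace E] (T : E →L[ℂ] E) {μ : ℝ} (hμ : 0 < μ)
    (hT : ∀ x : E, μ * ‖x‖ ^ 2 ≤ (⟪x, T x⟫).re) : Function.Surjective T := by
  have hbound : ∀ x : E, μ * ‖x‖ ≤ ‖T x‖ := by
    intro x
    rcases eq_or_ne x 0 with rfl | hx
    · simp
    have h1 : μ * ‖x‖ ^ 2 ≤ ‖x‖ * ‖T x‖ := by
      refine (hT x).trans ((Complex.re_le_norm _).trans ?_)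
      exact norm_inner_le_norm x (T x)
    have hx' : 0 < ‖x‖ := norm_pos_iff.mpr hx
    nlinarith
  have antilip : AntilipschitzWith (⟨μ⁻¹, by positivity⟩ : NNReal) T := by
    refine T.antilipschitz_of_bound fun x => ?_
    show ‖x‖ ≤ μ⁻¹ * ‖T x‖
    rw [inv_mul_eq_div, le_div_iff₀ hμ, mul_comm]
    exact hbound x
  have hclosed : IsClosed ((LinearMap.range (T : E →ₗ[ℂ] E)) : Set E) := by
    have hr : ((LinearMap.range (T : E →ₗ[ℂ] E)) : Set E) = Set.range T := LinearMap.coe_range _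
    rw [hr]
    exact antilip.isClosed_range T.uniformContinuous
  have hC : CompleteSpace (LinearMap.range (T : E →ₗ[ℂ] E)) := hclosed.completeSpace_coe
  have hbot : (LinearMap.range (T : E →ₗ[ℂ] E))ᗮ = ⊥ := by
    rw [Submodule.eq_bot_iff]
    intro y hy
    have h0 : ⟪T y, y⟫ = 0 :=
      (Submodule.mem_orthogonal _ y).mp hy (T y) (LinearMap.mem_range_self _ y)
    have h1 : ⟪y, T y⟫ = 0 := by rw [← inner_conj_symm, h0, map_zero]
    have h2 := hT y
    rw [h1] at h2
    simp only [Complex.zero_re] at h2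
    have h3 : ‖y‖ ^ 2 ≤ 0 := by nlinarith
    have h4 : ‖y‖ ^ 2 = 0 := le_antisymm h3 (sq_nonneg _)
    have h5 : ‖y‖ = 0 := by
      exact (pow_eq_zero_iff two_ne_zero).mp h4
    simpa using norm_eq_zero.mp h5
  rw [Submodule.orthogonal_eq_bot_iff] at hbot
  exact LinearMap.range_eq_top.mp hbot


/-- The graph of an operator characterised as `-D*` is closed. -/
lemma gi_isClosed (Gi : H₀ →ₗ.[ℂ] H₁) (D : H₁ →ₗ.[ℂ] H₀)
    (hGi : ∀ u w, (u, w) ∈ Gi.graph ↔ ∀ q s, (q, s) ∈ D.graph → ⟪w, q⟫ = -⟪u, s⟫) :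
    IsClosed (Gi.graph : Set (H₀ × H₁)) := by
  have hset : (Gi.graph : Set (H₀ × H₁)) =
      ⋂ qs ∈ (D.graph : Set (H₁ × H₀)), {x : H₀ × H₁ | ⟪x.2, qs.1⟫ = -⟪x.1, qs.2⟫} := by
    ext x
    simp only [Set.mem_iInter, Set.mem_setOf_eq, SetLike.mem_coe]
    rw [show x = (x.1, x.2) from rfl, hGi x.1 x.2]
    constructor
    · rintro h ⟨q, s⟩ hqs; exact h q s hqs
    · intro h q s hqs; exact h (q, s) hqs
  rw [hset]
  refine isClosed_biInter fun qs _ => isClosed_eq ?_ ?_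
  · exact Continuous.inner continuous_snd continuous_const
  · exact (Continuous.inner continuous_fst continuous_const).neg

/-- For a closed operator `D`, membership in the graph of `D` follows from
orthogonality against the graph of `Gi = -D*`. -/
lemma mem_D_graph (D : H₁ →ₗ.[ℂ] H₀) (Gi : H₀ →ₗ.[ℂ] H₁)
    (hDclosed : IsClosed (D.graph : Set (H₁ × H₀)))
    (hGi : ∀ u w, (u, w) ∈ Gi.graph ↔ ∀ q s, (q, s) ∈ D.graph → ⟪w, q⟫ = -⟪u, s⟫)
    (q : H₁) (s : H₀) (h : ∀ u w, (u, w) ∈ Gi.graph → ⟪s, u⟫ + ⟪q, w⟫ = 0) :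
    (q, s) ∈ D.graph := by
  set e := WithLp.linearEquiv 2 ℂ (H₁ × H₀) with he
  set W : Submodule ℂ (WithLp 2 (H₁ × H₀)) := D.graph.comap e.toLinearMap with hW
  have hWclosed : IsClosed (W : Set (WithLp 2 (H₁ × H₀))) := by
    have : (W : Set (WithLp 2 (H₁ × H₀))) =
        (WithLp.prodContinuousLinearEquiv 2 ℂ H₁ H₀) ⁻¹' (D.graph : Set (H₁ × H₀)) := rfl
    rw [this]
    exact hDclosed.preimage (WithLp.prodContinuousLinearEquiv 2 ℂ H₁ H₀).continuous
  have hWcomplete : CompleteSpace W := hWclosed.completeSpace_coe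
  have key : e.symm (q, s) ∈ Wᗮᗮ := by
    rw [Submodule.mem_orthogonal]
    intro z hz
    have hzGi : (z.snd, z.fst) ∈ Gi.graph := by
      rw [hGi]
      intro q' s' hq's'
      have hmem : e.symm (q', s') ∈ W := by
        rw [hW, Submodule.mem_comap]
        exact hq's'
      have h0 := (Submodule.mem_orthogonal W z).mp hz _ hmem
      rw [WithLp.prod_inner_apply] at h0
      have h0' : ⟪q', z.fst⟫ + ⟪s', z.snd⟫ = 0 := h0
      have := congrArg (starRingEnd ℂ) h0'
      simp only [map_add, inner_conj_symm, map_zero] at this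
      linear_combination this
    have hqs := h z.snd z.fst hzGi
    rw [WithLp.prod_inner_apply]
    have := congrArg (starRingEnd ℂ) hqs
    simp only [map_add, inner_conj_symm, map_zero] at this
    have he1 : (e.symm (q, s)).fst = q := rfl
    have he2 : (e.symm (q, s)).snd = s := rfl
    show ⟪z.fst, q⟫ + ⟪z.snd, s⟫ = 0
    linear_combination this
  rw [Submodule.orthogonal_orthogonal] at key
  rw [hW, Submodule.mem_comap] at key
  exact key


set_option maxHeartbeats 1600000 in
/-- Proposition 2.9: unique solvability of the Dirichlet problem: for
`u₀ ∈ BD(G)` there is a unique `u ∈ dom (D a G)` with `m u - D a G u = 0` and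
`u - u₀ ∈ dom G̊`. -/
theorem statement5
    (G Gi : H₀ →ₗ.[ℂ] H₁) (D Di : H₁ →ₗ.[ℂ] H₀)
    (hGdense : Dense (G.domain : Set H₀)) (hDdense : Dense (D.domain : Set H₁))
    (hGclosed : IsClosed (G.graph : Set (H₀ × H₁)))
    (hDclosed : IsClosed (D.graph : Set (H₁ × H₀)))
    (hGi : ∀ u w, (u, w) ∈ Gi.graph ↔ ∀ q s, (q, s) ∈ D.graph → ⟪w, q⟫ = -⟪u, s⟫)
    (hDi : ∀ q w, (q, w) ∈ Di.graph ↔ ∀ u p, (u, p) ∈ G.graph → ⟪w, u⟫ = -⟪q, p⟫)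
    (hGiG : Gi.graph ≤ G.graph) (hDiD : Di.graph ≤ D.graph)
    (a : H₁ →L[ℂ] H₁) (m : H₀ →L[ℂ] H₀)
    (ha : Coercive a) (hm : Coercive m)
    (u₀ : H₀) (hu₀ : memBD G Gi u₀) :
    ∃! u : H₀, ∃ p : H₁, (u, p) ∈ G.graph ∧ (a p, m u) ∈ D.graph ∧
      u - u₀ ∈ Gi.domain := by
  obtain ⟨μa, hμa, hacoer⟩ := ha
  obtain ⟨μm, hμm, hmcoer⟩ := hm
  obtain ⟨p₀, hp₀, -⟩ := hu₀
  set e := WithLp.linearEquiv 2 ℂ (H₀ × H₁) with he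
  set V₀ : Submodule ℂ (WithLp 2 (H₀ × H₁)) := Gi.graph.comap e.toLinearMap with hV₀
  have hGiclosed := gi_isClosed Gi D hGi
  have hV₀closed : IsClosed (V₀ : Set (WithLp 2 (H₀ × H₁))) := by
    have : (V₀ : Set (WithLp 2 (H₀ × H₁))) =
        (WithLp.prodContinuousLinearEquiv 2 ℂ H₀ H₁) ⁻¹' (Gi.graph : Set (H₀ × H₁)) := rfl
    rw [this]
    exact hGiclosed.preimage (WithLp.prodContinuousLinearEquiv 2 ℂ H₀ H₁).continuous
  have hV₀complete : CompleteSpace V₀ := hV₀closed.completeSpace_coe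
  let A : WithLp 2 (H₀ × H₁) →L[ℂ] WithLp 2 (H₀ × H₁) :=
    ((WithLp.prodContinuousLinearEquiv 2 ℂ H₀ H₁).symm :
        (H₀ × H₁) →L[ℂ] WithLp 2 (H₀ × H₁)).comp
      ((m.prodMap a).comp
        ((WithLp.prodContinuousLinearEquiv 2 ℂ H₀ H₁) : WithLp 2 (H₀ × H₁) →L[ℂ] H₀ × H₁))
  set μ := min μm μa with hμdef
  have hμ : 0 < μ := lt_min hμm hμa
  have hAcoer : ∀ z : WithLp 2 (H₀ × H₁), μ * ‖z‖ ^ 2 ≤ (⟪z, A z⟫).re := by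
    intro z
    have h1 := hmcoer z.fst
    have h2 := hacoer z.snd
    have hn : ‖z‖ ^ 2 = ‖z.fst‖ ^ 2 + ‖z.snd‖ ^ 2 := WithLp.prod_norm_sq_eq_of_L2 z
    have hi : ⟪z, A z⟫ = ⟪z.fst, m z.fst⟫ + ⟪z.snd, a z.snd⟫ := rfl
    rw [hi, hn, Complex.add_re]
    have l1 : μ ≤ μm := min_le_left _ _
    have l2 : μ ≤ μa := min_le_right _ _
    nlinarith [sq_nonneg ‖z.fst‖, sq_nonneg ‖z.snd‖]
  set P := V₀.orthogonalProjectionOnto with hP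
  set T : V₀ →L[ℂ] V₀ := P.comp (A.comp V₀.subtypeL) with hT
  have hTcoer : ∀ v : V₀, μ * ‖v‖ ^ 2 ≤ (⟪v, T v⟫).re := by
    intro v
    have heq : (⟪v, T v⟫ : ℂ) = ⟪(v : WithLp 2 (H₀ × H₁)), A v⟫ := by
      have h1 : (⟪v, T v⟫ : ℂ) = ⟪(v : WithLp 2 (H₀ × H₁)), ((P (A v)) : WithLp 2 (H₀ × H₁))⟫ := rfl
      rw [h1, hP, ← Submodule.starProjection_apply, ← Submodule.inner_starProjection_left_eq_right,
        Submodule.starProjection_mem_subspace_eq_self]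
    rw [heq]
    exact hAcoer v
  set z₀ : WithLp 2 (H₀ × H₁) := e.symm (u₀, p₀) with hz₀
  obtain ⟨v, hv⟩ := coercive_surj T hμ hTcoer (-(P (A z₀)))
  set z : WithLp 2 (H₀ × H₁) := z₀ + (v : WithLp 2 (H₀ × H₁)) with hz
  have hPz : P (A z) = 0 := by
    have hAz : A z = A z₀ + A (v : WithLp 2 (H₀ × H₁)) := by rw [hz, map_add]
    rw [hAz, map_add]
    have hTv : P (A (v : WithLp 2 (H₀ × H₁))) = T v := rfl
    rw [hTv, hv]
    simp
  have hAzperp : A z ∈ V₀ᗮ := Submodule.orthogonalProjectionOnto_eq_zero_iff.mp hPz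
  have hvV₀ : (((v : WithLp 2 (H₀ × H₁)).fst, (v : WithLp 2 (H₀ × H₁)).snd) : H₀ × H₁) ∈
      Gi.graph := v.2
  set u : H₀ := u₀ + (v : WithLp 2 (H₀ × H₁)).fst with hu
  set p : H₁ := p₀ + (v : WithLp 2 (H₀ × H₁)).snd with hpdef
  have hGup : (u, p) ∈ G.graph := by
    have h1 := add_mem hp₀ (hGiG hvV₀)
    simpa [Prod.mk_add_mk] using h1
  have hdomu : u - u₀ ∈ Gi.domain := by
    have hux : u - u₀ = (v : WithLp 2 (H₀ × H₁)).fst := by rw [hu]; abel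
    rw [hux]
    rcases (LinearPMap.mem_graph_iff _).mp hvV₀ with ⟨y, hy1, -⟩
    rw [show ((v : WithLp 2 (H₀ × H₁)).fst) = y from hy1.symm]
    exact y.2
  have hDmem : (a p, m u) ∈ D.graph := by
    apply mem_D_graph D Gi hDclosed hGi
    intro x y hxy
    have hcV₀ : e.symm (x, y) ∈ V₀ := by
      rw [hV₀, Submodule.mem_comap]
      simpa using hxy
    have h0 := (Submodule.mem_orthogonal V₀ (A z)).mp hAzperp _ hcV₀
    rw [WithLp.prod_inner_apply] at h0
    have h0' : ⟪x, m u⟫ + ⟪y, a p⟫ = 0 := h0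
    have hconj := congrArg (starRingEnd ℂ) h0'
    simp only [map_add, inner_conj_symm, map_zero] at hconj
    linear_combination hconj
  refine ⟨u, ⟨p, hGup, hDmem, hdomu⟩, ?_⟩
  rintro u' ⟨p', hGup', hDmem', hdomu'⟩
  have hxdom : u' - u ∈ Gi.domain := by
    have h1 := sub_mem hdomu' hdomu
    simpa [sub_sub_sub_cancel_right] using h1
  set x := u' - u with hxdef
  set y := Gi ⟨x, hxdom⟩ with hy
  have hxy : (x, y) ∈ Gi.graph := Gi.mem_graph ⟨x, hxdom⟩
  have hxyG : (x, y) ∈ G.graph := hGiG hxy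
  have hxpG : (x, p' - p) ∈ G.graph := by
    have h1 := sub_mem hGup' hGup
    simpa [Prod.mk_sub_mk] using h1
  have hyp : y = p' - p := by
    rcases (LinearPMap.mem_graph_iff _).mp hxyG with ⟨w1, hw1, hw1'⟩
    rcases (LinearPMap.mem_graph_iff _).mp hxpG with ⟨w2, hw2, hw2'⟩
    have hw : w1 = w2 := by
      apply Subtype.ext
      have hw1a : (w1 : H₀) = x := hw1
      have hw2a : (w2 : H₀) = x := hw2
      rw [hw1a, hw2a]
    have e1 : y = G w1 := hw1'.symm
    have e2 : p' - p = G w2 := hw2'.symm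
    rw [e1, e2, hw]
  have hDd : (a y, m x) ∈ D.graph := by
    rw [hyp, hxdef]
    have h1 := sub_mem hDmem' hDmem
    simpa [Prod.mk_sub_mk, map_sub] using h1
  have hkey := (hGi x y).mp hxy (a y) (m x) hDd
  have hre : (⟪x, m x⟫).re + (⟪y, a y⟫).re = 0 := by
    have h1 := congrArg Complex.re hkey
    simp only [Complex.neg_re] at h1
    linarith
  have h1 := hmcoer x
  have h2 := hacoer y
  have hx0 : ‖x‖ ^ 2 ≤ 0 := by nlinarith [sq_nonneg ‖y‖]
  have hxz : x = 0 := by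
    have h4 := le_antisymm hx0 (sq_nonneg _)
    exact norm_eq_zero.mp ((pow_eq_zero_iff two_ne_zero).mp h4)
  rw [hxdef] at hxz
  exact sub_eq_zero.mp hxz


end DtNPaper
end
end

section
/- Let a be a coercive bounded operator on H₁ and m a coercive bounded operator on H₀. Let q₀ ∈ BD(D). Then there exists a unique u ∈ dom(G) such that aGu ∈ dom(D), mu − DaGu = 0 and aGu − q₀ ∈ dom(D̊). -/
open Filter Topology

noncomputable section

namespace DtNPaper

local notation "⟪" x ", " y "⟫" => (inner ℂ x y : ℂ)

variable {H₀ H₁ HS : Type*}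
  [NormedAddCommGroup H₀] [InnerProductSpace ℂ H₀] [CompleteSpace H₀]
  [NormedAddCommGroup H₁] [InnerProductSpace ℂ H₁] [CompleteSpace H₁]

private theorem coercive_bijective {V : Type*} [NormedAddCommGroup V] [InnerProductSpace ℂ V]
    [CompleteSpace V] (T : V →L[ℂ] V) {μ : ℝ} (hμ : 0 < μ)
    (hT : ∀ z : V, μ * ‖z‖ ^ 2 ≤ (⟪z, T z⟫).re) : Function.Bijective T := by
  have hbound : ∀ z : V, ‖z‖ ≤ (⟨μ⁻¹, by positivity⟩ : NNReal) * ‖T z‖ := by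
    intro z
    rcases eq_or_ne z 0 with rfl | hz
    · simp
    · have hz' : 0 < ‖z‖ := norm_pos_iff.mpr hz
      have h1 : μ * ‖z‖ ^ 2 ≤ ‖z‖ * ‖T z‖ := by
        calc μ * ‖z‖ ^ 2 ≤ (⟪z, T z⟫).re := hT z
          _ ≤ ‖(⟪z, T z⟫)‖ := by
              exact Complex.re_le_norm _
          _ ≤ ‖z‖ * ‖T z‖ := norm_inner_le_norm _ _
      have : ‖z‖ ≤ μ⁻¹ * ‖T z‖ := by
        rw [inv_mul_eq_div, le_div_iff₀ hμ]
        nlinarith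
      simpa using this
  have hanti : AntilipschitzWith _ T := T.antilipschitz_of_bound hbound
  have hclosed : IsClosed (Set.range T) := hanti.isClosed_range T.uniformContinuous
  set R : Submodule ℂ V := LinearMap.range (T : V →ₗ[ℂ] V) with hR
  have hRclosed : IsClosed (R : Set V) := by
    rw [hR, LinearMap.coe_range]
    exact hclosed
  haveI : CompleteSpace R := hRclosed.completeSpace_coe
  have horth : Rᗮ = ⊥ := by
    rw [Submodule.eq_bot_iff]
    intro y hy
    have h0 : ⟪T y, y⟫ = 0 :=
      (Submodule.mem_orthogonal R y).mp hy (T y) (LinearMap.mem_range_self _ y)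
    have h0' : ⟪y, T y⟫ = 0 := by
      rw [← inner_conj_symm, h0, map_zero]
    have := hT y
    rw [h0'] at this
    simp only [Complex.zero_re] at this
    have h2 : ‖y‖ ^ 2 ≤ μ * 0 / μ := by
      rw [mul_zero]
      exact (le_div_iff₀' hμ).mpr this
    have h3 : ‖y‖ ^ 2 = 0 := le_antisymm (by simpa using h2) (by positivity)
    have : ‖y‖ = 0 := by
      have := pow_eq_zero_iff (n := 2) (by norm_num) |>.mp h3
      exact this
    simpa using this
  have htop : R = ⊤ := Submodule.orthogonal_eq_bot_iff.mp horth
  exact ⟨hanti.injective, LinearMap.range_eq_top.mp htop⟩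

set_option maxHeartbeats 2000000 in
/-- Proposition 2.12: unique solvability of the Neumann problem: for
`q₀ ∈ BD(D)` there is a unique `u ∈ dom (D a G)` with `m u - D a G u = 0` and
`a G u - q₀ ∈ dom D̊`. -/
theorem statement6
    (G Gi : H₀ →ₗ.[ℂ] H₁) (D Di : H₁ →ₗ.[ℂ] H₀)
    (hGdense : Dense (G.domain : Set H₀)) (hDdense : Dense (D.domain : Set H₁))
    (hGclosed : IsClosed (G.graph : Set (H₀ × H₁)))
    (hDclosed : IsClosed (D.graph : Set (H₁ × H₀)))
    (hGi : ∀ u w, (u, w) ∈ Gi.graph ↔ ∀ q s, (q, s) ∈ D.graph → ⟪w, q⟫ = -⟪u, s⟫)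
    (hDi : ∀ q w, (q, w) ∈ Di.graph ↔ ∀ u p, (u, p) ∈ G.graph → ⟪w, u⟫ = -⟪q, p⟫)
    (hGiG : Gi.graph ≤ G.graph) (hDiD : Di.graph ≤ D.graph)
    (a : H₁ →L[ℂ] H₁) (m : H₀ →L[ℂ] H₀)
    (ha : Coercive a) (hm : Coercive m)
    (q₀ : H₁) (hq₀ : memBD D Di q₀) :
    ∃! u : H₀, ∃ p : H₁, (u, p) ∈ G.graph ∧ (a p, m u) ∈ D.graph ∧
      a p - q₀ ∈ Di.domain := by
  classical
  obtain ⟨r₀, hq₀D, -⟩ := hq₀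
  obtain ⟨μa, hμa, hacoer⟩ := ha
  obtain ⟨μm, hμm, hmcoer⟩ := hm
  set μ : ℝ := min μa μm with hμdef
  have hμ : 0 < μ := lt_min hμa hμm
  let e : WithLp 2 (H₀ × H₁) ≃L[ℂ] H₀ × H₁ := WithLp.prodContinuousLinearEquiv 2 ℂ H₀ H₁
  let V : Submodule ℂ (WithLp 2 (H₀ × H₁)) :=
    G.graph.comap (e.toLinearEquiv : WithLp 2 (H₀ × H₁) →ₗ[ℂ] H₀ × H₁)
  have hVmem : ∀ z : WithLp 2 (H₀ × H₁), z ∈ V ↔ e z ∈ G.graph := fun z => Iff.rfl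
  have hVclosed : IsClosed (V : Set (WithLp 2 (H₀ × H₁))) := by
    have h : (V : Set (WithLp 2 (H₀ × H₁))) = e ⁻¹' (G.graph : Set (H₀ × H₁)) := rfl
    rw [h]
    exact hGclosed.preimage e.continuous
  haveI : CompleteSpace V := hVclosed.completeSpace_coe
  have memV : ∀ x : H₀ × H₁, x ∈ G.graph → (e.symm x : WithLp 2 (H₀ × H₁)) ∈ V := by
    intro x hx
    rw [hVmem, e.apply_symm_apply]
    exact hx
  have hinnerE : ∀ x y : H₀ × H₁,
      ⟪(e.symm x : WithLp 2 (H₀ × H₁)), (e.symm y : WithLp 2 (H₀ × H₁))⟫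
        = ⟪x.1, y.1⟫ + ⟪x.2, y.2⟫ := fun x y => rfl
  let Φ : V →L[ℂ] WithLp 2 (H₀ × H₁) :=
    (e.symm : H₀ × H₁ →L[ℂ] WithLp 2 (H₀ × H₁)) ∘L (m.prodMap a) ∘L
      (e : WithLp 2 (H₀ × H₁) →L[ℂ] H₀ × H₁) ∘L V.subtypeL
  have hΦ : ∀ z : V, Φ z
      = e.symm (m (e (z : WithLp 2 (H₀ × H₁))).1, a (e (z : WithLp 2 (H₀ × H₁))).2) :=
    fun z => rfl
  set P := Submodule.orthogonalProjectionOnto V with hP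
  let T : V →L[ℂ] V := P.comp Φ
  have key : ∀ (w : V) (x : WithLp 2 (H₀ × H₁)),
      ⟪w, P x⟫ = ⟪(w : WithLp 2 (H₀ × H₁)), x⟫ := by
    intro w x
    have h0 := (Submodule.mem_orthogonal V _).mp
      (Submodule.sub_starProjection_mem_orthogonal (K := V) x) w w.2
    rw [inner_sub_right, sub_eq_zero] at h0
    rw [Submodule.coe_inner]
    exact h0.symm
  have hcoerT : ∀ z : V, μ * ‖z‖ ^ 2 ≤ (⟪z, T z⟫).re := by
    intro z
    set x := e (z : WithLp 2 (H₀ × H₁)) with hx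
    have h2 : (z : WithLp 2 (H₀ × H₁)) = e.symm x := by rw [hx, e.symm_apply_apply]
    have h1 : ⟪z, T z⟫ = ⟪x.1, m x.1⟫ + ⟪x.2, a x.2⟫ := by
      calc ⟪z, T z⟫ = ⟪(z : WithLp 2 (H₀ × H₁)), Φ z⟫ := key z (Φ z)
        _ = ⟪(e.symm x : WithLp 2 (H₀ × H₁)), (e.symm (m x.1, a x.2) : WithLp 2 (H₀ × H₁))⟫ := by
            rw [← h2, hΦ]
        _ = ⟪x.1, m x.1⟫ + ⟪x.2, a x.2⟫ := hinnerE _ _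
    have hnorm : ‖z‖ ^ 2 = ‖x.1‖ ^ 2 + ‖x.2‖ ^ 2 := by
      have h3 : ‖z‖ = ‖(z : WithLp 2 (H₀ × H₁))‖ := rfl
      rw [h3, WithLp.prod_norm_sq_eq_of_L2]
      rfl
    rw [h1, hnorm, Complex.add_re]
    have ha1 := hacoer x.2
    have hm1 := hmcoer x.1
    have h4 : μ ≤ μa := min_le_left _ _
    have h5 : μ ≤ μm := min_le_right _ _
    nlinarith [sq_nonneg ‖x.1‖, sq_nonneg ‖x.2‖]
  have hbij : Function.Bijective T := coercive_bijective T hμ hcoerT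
  set yE : WithLp 2 (H₀ × H₁) := (e.symm (r₀, q₀) : WithLp 2 (H₀ × H₁)) with hyE
  set y₀ : V := P yE with hy₀
  have horthE : ∀ z : V, T z = y₀ ↔ Φ z - yE ∈ Vᗮ := by
    intro z
    have hTz : T z = P (Φ z) := rfl
    constructor
    · intro h
      have h6 : P (Φ z - yE) = 0 := by
        rw [map_sub, ← hTz, h, hy₀, sub_self]
      exact Submodule.orthogonalProjectionOnto_eq_zero_iff.mp h6
    · intro h
      have h6 : P (Φ z - yE) = 0 := Submodule.orthogonalProjectionOnto_eq_zero_iff.mpr h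
      rw [map_sub, sub_eq_zero] at h6
      rw [hTz, h6, hy₀]
  have hdiff : ∀ z : V, Φ z - yE
      = (e.symm (m (e (z : WithLp 2 (H₀ × H₁))).1 - r₀,
          a (e (z : WithLp 2 (H₀ × H₁))).2 - q₀) : WithLp 2 (H₀ × H₁)) := by
    intro z
    rw [hΦ, hyE, ← map_sub, Prod.mk_sub_mk]
  have hmemorth : ∀ (s : H₀) (t : H₁),
      (e.symm (s, t) : WithLp 2 (H₀ × H₁)) ∈ Vᗮ
        ↔ ∀ v q, (v, q) ∈ G.graph → ⟪v, s⟫ + ⟪q, t⟫ = 0 := by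
    intro s t
    rw [Submodule.mem_orthogonal]
    constructor
    · intro h v q hvq
      have := h (e.symm (v, q)) (memV _ hvq)
      rwa [hinnerE] at this
    · intro h w hw
      have hw' : e w ∈ G.graph := (hVmem w).mp hw
      have h7 := h (e w).1 (e w).2 (by rwa [Prod.mk.eta])
      have hrw : w = (e.symm (e w) : WithLp 2 (H₀ × H₁)) := (e.symm_apply_apply w).symm
      rw [hrw, hinnerE]
      exact h7
  have main : ∀ (u : H₀) (p : H₁) (hG : (u, p) ∈ G.graph),
      ((a p, m u) ∈ D.graph ∧ a p - q₀ ∈ Di.domain)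
        ↔ T ⟨e.symm (u, p), memV _ hG⟩ = y₀ := by
    intro u p hG
    set z : V := ⟨e.symm (u, p), memV _ hG⟩ with hz
    have hez : e (z : WithLp 2 (H₀ × H₁)) = (u, p) := e.apply_symm_apply _
    rw [horthE, hdiff, hez]
    constructor
    · rintro ⟨hD', hdom⟩
      set w' : H₀ := Di ⟨a p - q₀, hdom⟩ with hw'def
      have hw' : (a p - q₀, w') ∈ Di.graph := Di.mem_graph ⟨a p - q₀, hdom⟩
      have hpair := (hDi _ _).mp hw'
      have hDD : (a p - q₀, w') ∈ D.graph := hDiD hw'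
      have hsum := D.graph.add_mem hDD hq₀D
      rw [Prod.mk_add_mk, sub_add_cancel] at hsum
      have hmu : m u = w' + r₀ := D.mem_graph_snd_inj hD' hsum rfl
      have hw'eq : w' = m u - r₀ := by rw [hmu, add_sub_cancel_right]
      rw [hmemorth]
      intro v q hvq
      have h8 : ⟪m u - r₀, v⟫ = -⟪a p - q₀, q⟫ := by
        rw [← hw'eq]; exact hpair v q hvq
      have h9 : ⟪v, m u - r₀⟫ = -⟪q, a p - q₀⟫ := by
        rw [← inner_conj_symm, h8, map_neg, inner_conj_symm]
      rw [h9]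
      ring
    · intro h
      rw [hmemorth] at h
      have hDigr : (a p - q₀, m u - r₀) ∈ Di.graph := by
        rw [hDi]
        intro v q hvq
        have h1 : ⟪v, m u - r₀⟫ = -⟪q, a p - q₀⟫ :=
          eq_neg_of_add_eq_zero_left (h v q hvq)
        rw [← inner_conj_symm, h1, map_neg, inner_conj_symm]
      have hdom : a p - q₀ ∈ Di.domain := by
        obtain ⟨y, hy1, -⟩ := Di.mem_graph_iff.mp hDigr
        have hy1' : (y : H₁) = a p - q₀ := hy1
        exact hy1' ▸ y.2
      have hDgr : (a p - q₀, m u - r₀) ∈ D.graph := hDiD hDigr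
      have hsum := D.graph.add_mem hDgr hq₀D
      rw [Prod.mk_add_mk, sub_add_cancel, sub_add_cancel] at hsum
      exact ⟨hsum, hdom⟩
  obtain ⟨z, hTz⟩ := hbij.2 y₀
  set u : H₀ := (e (z : WithLp 2 (H₀ × H₁))).1 with hu
  set p : H₁ := (e (z : WithLp 2 (H₀ × H₁))).2 with hp
  have hG : (u, p) ∈ G.graph := by
    rw [hu, hp, Prod.mk.eta]
    exact (hVmem _).mp z.2
  have hzz : (⟨e.symm (u, p), memV _ hG⟩ : V) = z := by
    apply Subtype.ext
    show (e.symm (u, p) : WithLp 2 (H₀ × H₁)) = (z : WithLp 2 (H₀ × H₁))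
    rw [hu, hp, Prod.mk.eta, e.symm_apply_apply]
  have hsol := (main u p hG).mpr (by rw [hzz]; exact hTz)
  refine ⟨u, ⟨p, hG, hsol.1, hsol.2⟩, ?_⟩
  rintro u' ⟨p', hG', hD', hdom'⟩
  have hT' : T ⟨e.symm (u', p'), memV _ hG'⟩ = y₀ := (main u' p' hG').mp ⟨hD', hdom'⟩
  have hzeq : (⟨e.symm (u', p'), memV _ hG'⟩ : V) = z := by
    apply hbij.1
    rw [hT', hTz]
  have := congrArg (fun w : V => (e (w : WithLp 2 (H₀ × H₁))).1) hzeq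
  simpa [e.apply_symm_apply] using this


end DtNPaper
end
end
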